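/- arXiv:2503.14157 — 4 statements merged into one kernel-verified Lean document; each statement's English description precedes it below -/
import Mathlib

section
/- (Hayman's local central limit theorem) Let f(z) = ∑_{n≥0} a_n z^n be a strongly Gaussian power series in the class K with radius of convergence R > 0. Then lim_{t↑R} sup_{n∈ℤ} | (a_n t^n / f(t)) · √(2π) · σ_f(t) − e^{−(m_f(t)−n)²/(2σ_f²(t))} | = 0, where a_n = 0 for integers n < 0. -/
open Filter Topology MeasureTheory
open scoped ENNReal NNReal Classical

noncomputable section

/-- `psum a t = ∑ aₙ tⁿ`, the value `f(t)` of the power series with coefficients `a`. -/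
def psum (a : ℕ → ℝ) (t : ℝ) : ℝ := ∑' n : ℕ, a n * t ^ n

/-- The mean `m_f(t)` of the Khinchin family of the power series with coefficients `a`. -/
def meanK (a : ℕ → ℝ) (t : ℝ) : ℝ :=
  (∑' n : ℕ, (n : ℝ) * a n * t ^ n) / ∑' n : ℕ, a n * t ^ n

/-- The variance `σ_f²(t)` of the Khinchin family. -/
def varK (a : ℕ → ℝ) (t : ℝ) : ℝ :=
  (∑' n : ℕ, (n : ℝ) ^ 2 * a n * t ^ n) / (∑' n : ℕ, a n * t ^ n) - meanK a t ^ 2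

/-- The standard deviation `σ_f(t)` of the Khinchin family. -/
def sdK (a : ℕ → ℝ) (t : ℝ) : ℝ := Real.sqrt (varK a t)

/-- The moment `E(X_t^p)` of real exponent `p` of the Khinchin family. -/
def momK (a : ℕ → ℝ) (p : ℝ) (t : ℝ) : ℝ :=
  (∑' n : ℕ, (n : ℝ) ^ p * a n * t ^ n) / ∑' n : ℕ, a n * t ^ n

/-- The filter of `t ↑ R`: `atTop` when `R = ∞`, and `𝓝[<] R` when `R < ∞`. -/
def nhdsUpto (R : ℝ≥0∞) : Filter ℝ :=
  if R = ⊤ then atTop else nhdsWithin R.toReal (Set.Iio R.toReal)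

/-- The power series `f` evaluated at a complex argument. -/
def Fc (a : ℕ → ℝ) (z : ℂ) : ℂ := ∑' n : ℕ, (a n : ℂ) * z ^ n

/-- The characteristic function `E(e^{iθ X̌_t})` of the normalized Khinchin variable:
`(f(t e^{iθ/σ_f(t)})/f(t)) · e^{-iθ m_f(t)/σ_f(t)}`. -/
def charN (a : ℕ → ℝ) (t θ : ℝ) : ℂ :=
  Fc a ((t : ℂ) * Complex.exp (Complex.I * ((θ / sdK a t : ℝ) : ℂ))) / Fc a (t : ℂ) *
    Complex.exp (-Complex.I * ((θ * meanK a t / sdK a t : ℝ) : ℂ))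

/-- `f` is strongly Gaussian: `σ_f(t) → ∞` and
`∫_{|θ|≤πσ_f(t)} |E(e^{iθX̌_t}) - e^{-θ²/2}| dθ → 0` as `t ↑ R`. -/
def StronglyGaussian (a : ℕ → ℝ) (R : ℝ≥0∞) : Prop :=
  Tendsto (sdK a) (nhdsUpto R) atTop ∧
    Tendsto (fun t => ∫ θ in (-(Real.pi * sdK a t))..(Real.pi * sdK a t),
        ‖charN a t θ - ((Real.exp (-θ ^ 2 / 2) : ℝ) : ℂ)‖) (nhdsUpto R) (𝓝 0)

-- oscillatory integral over a period
lemma integral_char (c : ℤ) :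
    ∫ θ in (-Real.pi)..Real.pi, Complex.exp (Complex.I * (c : ℂ) * (θ : ℂ))
      = if c = 0 then ((2 * Real.pi : ℝ) : ℂ) else 0 := by
  by_cases hc : c = 0
  · simp [hc, two_mul]
  · rw [if_neg hc]
    have hI : (Complex.I * (c:ℂ)) ≠ 0 := by
      simp [Complex.I_ne_zero, Int.cast_ne_zero, hc]
    have := integral_exp_mul_complex (a := -Real.pi) (b := Real.pi) hI
    rw [this]
    have hper : Complex.exp (Complex.I * (c:ℂ) * (Real.pi:ℂ))
        = Complex.exp (Complex.I * (c:ℂ) * ((-Real.pi : ℝ):ℂ)) := by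
      rw [← mul_one (Complex.exp (Complex.I * (c:ℂ) * ((-Real.pi : ℝ):ℂ))),
        ← Complex.exp_int_mul_two_pi_mul_I c, ← Complex.exp_add]
      push_cast
      ring_nf
    rw [hper, sub_self, zero_div]

-- per-term rewrite
lemma Fc_mul_eq (a : ℕ → ℝ) (t : ℝ) (n : ℤ) (θ : ℝ) :
    Fc a ((t:ℂ) * Complex.exp (Complex.I * (θ:ℂ))) * Complex.exp (-Complex.I * (n:ℂ) * (θ:ℂ))
      = ∑' k : ℕ, (a k : ℂ) * (t:ℂ)^k * Complex.exp (Complex.I * ((k:ℂ) - (n:ℂ)) * (θ:ℂ)) := by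
  rw [Fc, ← tsum_mul_right]
  refine tsum_congr fun k => ?_
  have h1 : Complex.exp (Complex.I * (θ:ℂ)) ^ k * Complex.exp (-Complex.I * (n:ℂ) * (θ:ℂ))
      = Complex.exp (Complex.I * ((k:ℂ) - (n:ℂ)) * (θ:ℂ)) := by
    rw [← Complex.exp_nat_mul, ← Complex.exp_add]
    congr 1
    ring
  rw [mul_pow, mul_assoc, mul_assoc, h1, ← mul_assoc]

lemma norm_term (a : ℕ → ℝ) (hpos : ∀ n, 0 ≤ a n) {t : ℝ} (ht : 0 ≤ t) (k : ℕ) (z : ℂ)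
    (hz : ‖z‖ = 1) : ‖(a k : ℂ) * (t:ℂ)^k * z‖ = a k * t^k := by
  rw [norm_mul, norm_mul, Complex.norm_real, norm_pow, Complex.norm_real] at *
  rw [hz, mul_one, Real.norm_of_nonneg (hpos k), Real.norm_of_nonneg ht]

lemma myFourierCoeff (a : ℕ → ℝ) (hpos : ∀ n, 0 ≤ a n) {t : ℝ} (ht : 0 ≤ t)
    (hsum : Summable fun n => a n * t ^ n) (n : ℤ) :
    ∫ θ in (-Real.pi)..Real.pi,
        Fc a ((t:ℂ) * Complex.exp (Complex.I * (θ:ℂ))) * Complex.exp (-Complex.I * (n:ℂ) * (θ:ℂ))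
      = ((2 * Real.pi : ℝ) : ℂ) *
          ((if 0 ≤ n then a n.toNat * t ^ n.toNat else 0 : ℝ) : ℂ) := by
  have hpi : (-Real.pi) ≤ Real.pi := by linarith [Real.pi_pos]
  have hco : ∀ θ : ℝ, Fc a ((t:ℂ) * Complex.exp (Complex.I * (θ:ℂ)))
      * Complex.exp (-Complex.I * (n:ℂ) * (θ:ℂ))
      = ∑' k : ℕ, (a k : ℂ) * (t:ℂ)^k * Complex.exp (Complex.I * ((k:ℂ) - (n:ℂ)) * (θ:ℂ)) :=
    Fc_mul_eq a t n
  rw [intervalIntegral.integral_congr (fun θ _ => hco θ)]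
  rw [intervalIntegral.integral_of_le hpi]
  set μ : Measure ℝ := volume.restrict (Set.Ioc (-Real.pi) Real.pi) with hμ
  have hmeas : ∀ k : ℕ, AEStronglyMeasurable
      (fun θ : ℝ => (a k : ℂ) * (t:ℂ)^k * Complex.exp (Complex.I * ((k:ℂ) - (n:ℂ)) * (θ:ℂ))) μ := by
    intro k
    exact (Continuous.aestronglyMeasurable (by continuity))
  have hnorm : ∀ (k : ℕ) (θ : ℝ),
      ‖(a k : ℂ) * (t:ℂ)^k * Complex.exp (Complex.I * ((k:ℂ) - (n:ℂ)) * (θ:ℂ))‖ = a k * t^k := by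
    intro k θ
    refine norm_term a hpos ht k _ ?_
    rw [Complex.norm_exp]
    have : (Complex.I * ((k:ℂ) - (n:ℂ)) * (θ:ℂ)).re = 0 := by
      simp [Complex.mul_re, Complex.mul_im]
    rw [this, Real.exp_zero]

  have hlin : ∑' k : ℕ, ∫⁻ θ, ‖(a k : ℂ) * (t:ℂ)^k
      * Complex.exp (Complex.I * ((k:ℂ) - (n:ℂ)) * (θ:ℂ))‖₊ ∂μ ≠ ⊤ := by
    have h1 : ∀ k : ℕ, ∫⁻ θ, ‖(a k : ℂ) * (t:ℂ)^k
        * Complex.exp (Complex.I * ((k:ℂ) - (n:ℂ)) * (θ:ℂ))‖₊ ∂μ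
        = ENNReal.ofReal (a k * t^k * (2 * Real.pi)) := by
      intro k
      have h2 : ∀ θ : ℝ, (‖(a k : ℂ) * (t:ℂ)^k
          * Complex.exp (Complex.I * ((k:ℂ) - (n:ℂ)) * (θ:ℂ))‖₊ : ℝ≥0∞)
          = ENNReal.ofReal (a k * t^k) := by
        intro θ
        rw [← enorm_eq_nnnorm, ← ofReal_norm_eq_enorm, hnorm k θ]
      simp_rw [h2]
      rw [lintegral_const, hμ, Measure.restrict_apply MeasurableSet.univ, Set.univ_inter,
        Real.volume_Ioc, ← ENNReal.ofReal_mul (mul_nonneg (hpos k) (pow_nonneg ht k))]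
      congr 1
      ring
    simp_rw [h1]
    rw [← ENNReal.ofReal_tsum_of_nonneg (fun k => mul_nonneg (mul_nonneg (hpos k)
      (pow_nonneg ht k)) (by positivity)) (hsum.mul_right _)]
    exact ENNReal.ofReal_ne_top
  rw [MeasureTheory.integral_tsum hmeas hlin]
  have h3 : ∀ k : ℕ, ∫ θ : ℝ, (a k : ℂ) * (t:ℂ)^k
      * Complex.exp (Complex.I * ((k:ℂ) - (n:ℂ)) * (θ:ℂ)) ∂μ
      = (a k : ℂ) * (t:ℂ)^k * (if (k:ℤ) = n then ((2 * Real.pi : ℝ) : ℂ) else 0) := by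
    intro k
    rw [MeasureTheory.integral_const_mul, hμ, ← intervalIntegral.integral_of_le hpi]
    congr 1
    have := integral_char (k - n)
    have hcast : (((k - n : ℤ)) : ℂ) = (k:ℂ) - (n:ℂ) := by push_cast; ring
    rw [hcast] at this
    rw [this]
    congr 1
    simp [sub_eq_zero]
  simp_rw [h3]
  by_cases hn : 0 ≤ n
  · rw [if_pos hn]
    have key : ∀ k : ℕ, k ≠ n.toNat → (a k : ℂ) * (t:ℂ)^k
        * (if (k:ℤ) = n then ((2 * Real.pi : ℝ) : ℂ) else 0) = 0 := by
      intro k hk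
      rw [if_neg, mul_zero]
      intro h
      exact hk (by omega)
    rw [tsum_eq_single n.toNat key, if_pos (by omega)]
    push_cast
    ring
  · rw [if_neg hn]
    have key : ∀ k : ℕ, (a k : ℂ) * (t:ℂ)^k
        * (if (k:ℤ) = n then ((2 * Real.pi : ℝ) : ℂ) else 0) = 0 := by
      intro k
      rw [if_neg (by omega), mul_zero]
    simp_rw [key]
    simp

lemma cont_Fc (a : ℕ → ℝ) (hpos : ∀ n, 0 ≤ a n) {t : ℝ} (ht : 0 ≤ t)
    (hsum : Summable fun n => a n * t ^ n) :
    Continuous fun u : ℝ => Fc a ((t:ℂ) * Complex.exp (Complex.I * (u:ℂ))) := by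
  have : (fun u : ℝ => Fc a ((t:ℂ) * Complex.exp (Complex.I * (u:ℂ))))
      = fun u : ℝ => ∑' k : ℕ, (a k : ℂ) * ((t:ℂ) * Complex.exp (Complex.I * (u:ℂ)))^k := rfl
  rw [this]
  refine continuous_tsum (fun k => by continuity) hsum (fun k u => ?_)
  rw [mul_pow, ← mul_assoc]
  refine le_of_eq (norm_term a hpos ht k _ ?_)
  rw [norm_pow, Complex.norm_exp]
  have : (Complex.I * (u:ℂ)).re = 0 := by simp
  rw [this, Real.exp_zero, one_pow]

lemma cont_charN (a : ℕ → ℝ) (hpos : ∀ n, 0 ≤ a n) {t : ℝ} (ht : 0 ≤ t)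
    (hsum : Summable fun n => a n * t ^ n) : Continuous (charN a t) := by
  unfold charN
  exact (((cont_Fc a hpos ht hsum).comp (continuous_id.div_const _)).div_const _).mul
    (Complex.continuous_exp.comp (by continuity))

lemma gaussianFT (x : ℝ) :
    ∫ u : ℝ, ((Real.exp (-u^2/2) : ℝ) : ℂ) * Complex.exp (-Complex.I * (u:ℂ) * (x:ℂ))
      = ((Real.sqrt (2 * Real.pi) : ℝ) : ℂ) * ((Real.exp (-x^2/2) : ℝ) : ℂ) := by
  have hb : (0:ℝ) < ((1/2 : ℂ)).re := by norm_num
  have := fourierIntegral_gaussian hb (-(x:ℂ))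
  have heq : ∀ u : ℝ, ((Real.exp (-u^2/2) : ℝ) : ℂ) * Complex.exp (-Complex.I * (u:ℂ) * (x:ℂ))
      = Complex.exp (Complex.I * (-(x:ℂ)) * (u:ℂ)) * Complex.exp (-(1/2 : ℂ) * (u:ℂ)^2) := by
    intro u
    rw [Complex.ofReal_exp, ← Complex.exp_add, ← Complex.exp_add]
    congr 1
    push_cast
    ring
  rw [funext heq] at *
  rw [this]
  have h1 : ((Real.pi : ℂ) / (1/2)) ^ (1/2 : ℂ) = ((Real.sqrt (2 * Real.pi) : ℝ) : ℂ) := by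
    have h2 : ((Real.pi : ℂ) / (1/2)) = ((2 * Real.pi : ℝ) : ℂ) := by push_cast; ring
    rw [h2, Real.sqrt_eq_rpow, Complex.ofReal_cpow (by positivity)]
    push_cast
    norm_num
  rw [h1]
  congr 1
  rw [Complex.ofReal_exp]
  congr 1
  push_cast
  ring

lemma master_bound (a : ℕ → ℝ) (hpos : ∀ n, 0 ≤ a n) (ha0 : 0 < a 0) {t : ℝ} (ht : 0 < t)
    (hsum : Summable fun n => a n * t ^ n) (hσ : 1 < sdK a t) (n : ℤ) :
    |(if 0 ≤ n then a n.toNat * t ^ n.toNat else 0) / psum a t * Real.sqrt (2 * Real.pi) * sdK a t -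
        Real.exp (-(meanK a t - (n : ℝ)) ^ 2 / (2 * varK a t))|
      ≤ (Real.sqrt (2 * Real.pi))⁻¹ *
        ((∫ θ in (-(Real.pi * sdK a t))..(Real.pi * sdK a t),
            ‖charN a t θ - ((Real.exp (-θ ^ 2 / 2) : ℝ) : ℂ)‖) +
          (Real.sqrt (2 * Real.pi) -
            ∫ θ in (-(Real.pi * sdK a t))..(Real.pi * sdK a t), Real.exp (-θ ^ 2 / 2))) := by
  have hσ0 : 0 < sdK a t := lt_trans zero_lt_one hσ
  set σ := sdK a t with hσdef
  set m := meanK a t with hmdef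
  have hvar : σ ^ 2 = varK a t := by
    rw [hσdef, sdK]
    exact Real.sq_sqrt (le_of_lt (Real.sqrt_pos.mp hσ0))
  have hF : 0 < psum a t := by
    have h := Summable.le_tsum hsum 0 (fun i _ => mul_nonneg (hpos i) (pow_nonneg ht.le i))
    simp only [pow_zero, mul_one] at h
    exact lt_of_lt_of_le ha0 h
  have hFc : Fc a (t:ℂ) = ((psum a t : ℝ) : ℂ) := by
    rw [Fc, psum, Complex.ofReal_tsum]
    exact tsum_congr fun k => by push_cast; ring
  set F := psum a t with hFdef
  set c : ℝ := (if 0 ≤ n then a n.toNat * t ^ n.toNat else 0) with hcdef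
  set x : ℝ := ((n:ℝ) - m) / σ with hxdef
  set e : ℝ → ℂ := fun u => Complex.exp (-Complex.I * (u:ℂ) * (x:ℂ)) with hedef
  set g : ℝ → ℂ := fun θ =>
    Fc a ((t:ℂ) * Complex.exp (Complex.I * (θ:ℂ))) * Complex.exp (-Complex.I * (n:ℂ) * (θ:ℂ))
    with hgdef
  set gauss : ℝ → ℂ := fun u => ((Real.exp (-u^2/2) : ℝ) : ℂ) with hGdef
  have hAB : -(Real.pi * σ) ≤ Real.pi * σ := by
    have := Real.pi_pos; nlinarith
  have h2pi : Real.sqrt (2*Real.pi) * Real.sqrt (2*Real.pi) = 2*Real.pi :=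
    Real.mul_self_sqrt (by positivity)
  have hs0 : (0:ℝ) < Real.sqrt (2*Real.pi) := Real.sqrt_pos.mpr (by positivity)
  -- Step A : the coefficient as an integral of charN
  have h1 : ∀ u : ℝ, charN a t u * e u = ((F : ℝ):ℂ)⁻¹ * g (u/σ) := by
    intro u
    rw [charN, hFc]
    have hexp : Complex.exp (-Complex.I * ((u * m / σ : ℝ) : ℂ)) * e u
        = Complex.exp (-Complex.I * (n:ℂ) * (((u/σ : ℝ)) : ℂ)) := by
      rw [hedef, ← Complex.exp_add]
      congr 1
      rw [hxdef]
      push_cast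
      ring
    rw [hgdef, mul_assoc, ← hσdef, ← hmdef, hexp]
    simp only
    rw [div_mul_eq_mul_div, div_eq_inv_mul]
  have hA : (∫ u in (-(Real.pi * σ))..(Real.pi * σ), charN a t u * e u)
      = ((2 * Real.pi * σ * c / F : ℝ) : ℂ) := by
    rw [intervalIntegral.integral_congr (fun u _ => h1 u),
      intervalIntegral.integral_const_mul, intervalIntegral.integral_comp_div g hσ0.ne',
      neg_div, mul_div_cancel_right₀ _ hσ0.ne']
    rw [myFourierCoeff a hpos ht.le hsum n, ← hcdef]
    rw [Complex.real_smul]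
    push_cast
    ring
  -- Step B : the Gaussian as an integral
  have hB : (∫ u : ℝ, gauss u * e u)
      = ((Real.sqrt (2 * Real.pi) : ℝ) : ℂ) * ((Real.exp (-x^2/2) : ℝ) : ℂ) := gaussianFT x
  -- integrability
  have hint1 : IntervalIntegrable (fun u => charN a t u * e u) volume
      (-(Real.pi * σ)) (Real.pi * σ) :=
    ((cont_charN a hpos ht.le hsum).mul (by continuity)).intervalIntegrable _ _
  have hint2R : Integrable (fun u => gauss u * e u) := by
    have heq : ∀ u : ℝ, gauss u * e u
        = Complex.exp (-(1/2:ℂ) * (u:ℂ)^2 + (-Complex.I * (x:ℂ)) * (u:ℂ) + 0) := by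
      intro u
      rw [hGdef, hedef]
      simp only
      rw [Complex.ofReal_exp, ← Complex.exp_add]
      congr 1
      push_cast
      ring
    rw [funext heq]
    exact integrable_cexp_quadratic (by norm_num) _ _
  have hint2 : IntervalIntegrable (fun u => gauss u * e u) volume
      (-(Real.pi * σ)) (Real.pi * σ) := hint2R.intervalIntegrable
  have hgaussR : Integrable (fun u : ℝ => Real.exp (-u^2/2)) := by
    have := integrable_exp_neg_mul_sq (show (0:ℝ) < 1/2 by norm_num)
    refine this.congr ?_
    filter_upwards with u
    congr 1
    ring
  have hnorme : ∀ u : ℝ, ‖e u‖ = 1 := by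
    intro u
    rw [hedef]
    simp only
    rw [Complex.norm_exp]
    have : (-Complex.I * (u:ℂ) * (x:ℂ)).re = 0 := by simp [Complex.mul_re, Complex.mul_im]
    rw [this, Real.exp_zero]
  -- tail bound
  have hgint : ∫ u : ℝ, Real.exp (-u^2/2) = Real.sqrt (2 * Real.pi) := by
    have := integral_gaussian (1/2)
    have h' : ∀ u : ℝ, Real.exp (-(1/2) * u^2) = Real.exp (-u^2/2) := fun u => by congr 1; ring
    rw [funext h'] at this
    rw [this]
    congr 1
    ring
  have htail : ‖(∫ u : ℝ, gauss u * e u)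
        - ∫ u in (-(Real.pi * σ))..(Real.pi * σ), gauss u * e u‖
      ≤ Real.sqrt (2 * Real.pi)
        - ∫ u in (-(Real.pi * σ))..(Real.pi * σ), Real.exp (-u^2/2) := by
    have hptw : ∀ u : ℝ, ‖gauss u * e u‖ = Real.exp (-u^2/2) := by
      intro u
      rw [norm_mul, hnorme, mul_one, hGdef]
      simp only
      rw [Complex.norm_real, Real.norm_of_nonneg (Real.exp_pos _).le]
    rw [intervalIntegral.integral_of_le hAB,
      ← integral_add_compl measurableSet_Ioc hint2R, add_sub_cancel_left]
    calc ‖∫ u in (Set.Ioc (-(Real.pi * σ)) (Real.pi * σ))ᶜ, gauss u * e u‖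
        ≤ ∫ u in (Set.Ioc (-(Real.pi * σ)) (Real.pi * σ))ᶜ, ‖gauss u * e u‖ :=
          norm_integral_le_integral_norm _
      _ = ∫ u in (Set.Ioc (-(Real.pi * σ)) (Real.pi * σ))ᶜ, Real.exp (-u^2/2) := by
          exact integral_congr_ae (ae_of_all _ fun u => hptw u)
      _ = Real.sqrt (2 * Real.pi)
          - ∫ u in (-(Real.pi * σ))..(Real.pi * σ), Real.exp (-u^2/2) := by
          rw [intervalIntegral.integral_of_le hAB, ← hgint,
            ← integral_add_compl measurableSet_Ioc hgaussR]
          ring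
  -- main estimate
  have hKA : ((c / F * Real.sqrt (2 * Real.pi) * σ : ℝ) : ℂ)
      = (((Real.sqrt (2 * Real.pi))⁻¹ : ℝ) : ℂ)
        * ∫ u in (-(Real.pi * σ))..(Real.pi * σ), charN a t u * e u := by
    rw [hA, ← Complex.ofReal_mul]
    congr 1
    have h2pi2 : (Real.sqrt 2 * Real.sqrt Real.pi) * (Real.sqrt 2 * Real.sqrt Real.pi)
        = 2 * Real.pi := by
      rw [Real.sqrt_mul (by norm_num) Real.pi] at h2pi
      exact h2pi
    field_simp
    linear_combination c * h2pi
  have hKB : ((Real.exp (-(m - (n:ℝ)) ^ 2 / (2 * varK a t)) : ℝ) : ℂ)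
      = (((Real.sqrt (2 * Real.pi))⁻¹ : ℝ) : ℂ) * ∫ u : ℝ, gauss u * e u := by
    rw [hB, ← Complex.ofReal_mul, ← Complex.ofReal_mul]
    congr 1
    rw [← mul_assoc, inv_mul_cancel₀ hs0.ne', one_mul]
    congr 1
    rw [← hvar, hxdef, div_pow]
    have hσ2 : σ^2 ≠ 0 := by positivity
    field_simp
    ring
  have h12 : ‖(∫ u in (-(Real.pi * σ))..(Real.pi * σ), charN a t u * e u)
      - ∫ u in (-(Real.pi * σ))..(Real.pi * σ), gauss u * e u‖
      ≤ ∫ θ in (-(Real.pi * σ))..(Real.pi * σ),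
          ‖charN a t θ - ((Real.exp (-θ ^ 2 / 2) : ℝ) : ℂ)‖ := by
    rw [← intervalIntegral.integral_sub hint1 hint2]
    have hsub : ∀ u : ℝ, charN a t u * e u - gauss u * e u = (charN a t u - gauss u) * e u :=
      fun u => by rw [sub_mul]
    rw [intervalIntegral.integral_congr (fun u _ => hsub u)]
    refine le_trans (intervalIntegral.norm_integral_le_integral_norm hAB) ?_
    refine le_of_eq (intervalIntegral.integral_congr fun u _ => ?_)
    rw [norm_mul, hnorme, mul_one, hGdef]
  have hmain : ‖((c / F * Real.sqrt (2 * Real.pi) * σ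
      - Real.exp (-(m - (n:ℝ)) ^ 2 / (2 * varK a t)) : ℝ) : ℂ)‖
      ≤ (Real.sqrt (2 * Real.pi))⁻¹ *
        ((∫ θ in (-(Real.pi * σ))..(Real.pi * σ),
            ‖charN a t θ - ((Real.exp (-θ ^ 2 / 2) : ℝ) : ℂ)‖) +
          (Real.sqrt (2 * Real.pi) -
            ∫ θ in (-(Real.pi * σ))..(Real.pi * σ), Real.exp (-θ ^ 2 / 2))) := by
    rw [Complex.ofReal_sub, hKA, hKB, ← mul_sub]
    rw [norm_mul, Complex.norm_real, Real.norm_of_nonneg (inv_nonneg.mpr hs0.le)]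
    refine mul_le_mul_of_nonneg_left ?_ (inv_nonneg.mpr hs0.le)
    have hsplit : (∫ u in (-(Real.pi * σ))..(Real.pi * σ), charN a t u * e u)
        - (∫ u : ℝ, gauss u * e u)
        = ((∫ u in (-(Real.pi * σ))..(Real.pi * σ), charN a t u * e u)
            - ∫ u in (-(Real.pi * σ))..(Real.pi * σ), gauss u * e u)
          - ((∫ u : ℝ, gauss u * e u)
            - ∫ u in (-(Real.pi * σ))..(Real.pi * σ), gauss u * e u) := by ring
    rw [hsplit]
    refine le_trans (norm_sub_le _ _) ?_
    exact add_le_add h12 htail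
  calc |c / F * Real.sqrt (2 * Real.pi) * σ
        - Real.exp (-(m - (n:ℝ)) ^ 2 / (2 * varK a t))|
      = ‖((c / F * Real.sqrt (2 * Real.pi) * σ
          - Real.exp (-(m - (n:ℝ)) ^ 2 / (2 * varK a t)) : ℝ) : ℂ)‖ := by
        rw [Complex.norm_real, Real.norm_eq_abs]
    _ ≤ _ := hmain

instance nhdsUpto_cg (R : ℝ≥0∞) : (nhdsUpto R).IsCountablyGenerated := by
  rw [nhdsUpto]
  split
  · infer_instance
  · infer_instance

theorem statement12' (a : ℕ → ℝ) (R : ℝ≥0∞) (hR : 0 < R)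
    (hpos : ∀ n, 0 ≤ a n) (ha0 : 0 < a 0) (ha1 : ∃ n, 1 ≤ n ∧ 0 < a n)
    (hconv : ∀ t : ℝ, 0 ≤ t → ENNReal.ofReal t < R → Summable fun n => a n * t ^ n)
    (hdiv : ∀ t : ℝ, R < ENNReal.ofReal t → ¬ Summable fun n => a n * t ^ n)
    (hSG : Tendsto (sdK a) (nhdsUpto R) atTop ∧
      Tendsto (fun t => ∫ θ in (-(Real.pi * sdK a t))..(Real.pi * sdK a t),
          ‖charN a t θ - ((Real.exp (-θ ^ 2 / 2) : ℝ) : ℂ)‖) (nhdsUpto R) (𝓝 0)) :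
    Tendsto
      (fun t : ℝ =>
        ⨆ n : ℤ,
          |(if 0 ≤ n then a n.toNat * t ^ n.toNat else 0) / psum a t *
                Real.sqrt (2 * Real.pi) * sdK a t -
              Real.exp (-(meanK a t - (n : ℝ)) ^ 2 / (2 * varK a t))|)
      (nhdsUpto R) (𝓝 0) := by
  obtain ⟨hsooo, hJ⟩ := hSG
  have hEv : ∀ᶠ t in nhdsUpto R, 0 < t ∧ ENNReal.ofReal t < R := by
    rw [nhdsUpto]
    by_cases htop : R = ⊤
    · rw [if_pos htop]
      filter_upwards [eventually_gt_atTop (0:ℝ)] with t ht0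
      exact ⟨ht0, htop ▸ ENNReal.ofReal_lt_top⟩
    · rw [if_neg htop]
      have hlt0 : 0 < R.toReal := ENNReal.toReal_pos hR.ne' htop
      have h1 : ∀ᶠ t in 𝓝[<] R.toReal, 0 < t :=
        (eventually_gt_nhds hlt0).filter_mono nhdsWithin_le_nhds
      have h2 : ∀ᶠ t in 𝓝[<] R.toReal, t ∈ Set.Iio R.toReal := eventually_mem_nhdsWithin
      filter_upwards [h1, h2] with t ht0 htR
      exact ⟨ht0, (ENNReal.ofReal_lt_iff_lt_toReal ht0.le htop).mpr htR⟩
  have hσ1 : ∀ᶠ t in nhdsUpto R, 1 < sdK a t := hsooo.eventually_gt_atTop 1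
  have hgaussR : Integrable (fun u : ℝ => Real.exp (-u^2/2)) := by
    have := integrable_exp_neg_mul_sq (show (0:ℝ) < 1/2 by norm_num)
    refine this.congr ?_
    filter_upwards with u
    congr 1
    ring
  have hgint : ∫ u : ℝ, Real.exp (-u^2/2) = Real.sqrt (2 * Real.pi) := by
    have := integral_gaussian (1/2)
    have h' : ∀ u : ℝ, Real.exp (-(1/2) * u^2) = Real.exp (-u^2/2) := fun u => by congr 1; ring
    rw [funext h'] at this
    rw [this]
    congr 1
    ring
  have hπσ : Tendsto (fun t => Real.pi * sdK a t) (nhdsUpto R) atTop :=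
    hsooo.const_mul_atTop Real.pi_pos
  have hginttend : Tendsto
      (fun t => ∫ θ in (-(Real.pi * sdK a t))..(Real.pi * sdK a t), Real.exp (-θ^2/2))
      (nhdsUpto R) (𝓝 (Real.sqrt (2 * Real.pi))) := by
    rw [← hgint]
    exact MeasureTheory.intervalIntegral_tendsto_integral hgaussR
      (tendsto_neg_atBot_iff.mpr hπσ) hπσ
  have hGtend : Tendsto (fun t => Real.sqrt (2 * Real.pi)
      - ∫ θ in (-(Real.pi * sdK a t))..(Real.pi * sdK a t), Real.exp (-θ^2/2))
      (nhdsUpto R) (𝓝 0) := by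
    have h := (tendsto_const_nhds (x := Real.sqrt (2 * Real.pi))).sub hginttend
    rw [sub_self] at h
    exact h
  have hBtend : Tendsto (fun t => (Real.sqrt (2 * Real.pi))⁻¹ *
      ((∫ θ in (-(Real.pi * sdK a t))..(Real.pi * sdK a t),
          ‖charN a t θ - ((Real.exp (-θ ^ 2 / 2) : ℝ) : ℂ)‖) +
        (Real.sqrt (2 * Real.pi) -
          ∫ θ in (-(Real.pi * sdK a t))..(Real.pi * sdK a t), Real.exp (-θ^2/2))))
      (nhdsUpto R) (𝓝 0) := by
    have := (hJ.add hGtend).const_mul (Real.sqrt (2 * Real.pi))⁻¹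
    simpa using this
  refine squeeze_zero' ?_ ?_ hBtend
  · filter_upwards with t
    exact Real.iSup_nonneg fun n => abs_nonneg _
  · filter_upwards [hEv, hσ1] with t htEv hσt
    obtain ⟨ht0, htR⟩ := htEv
    have hsum := hconv t ht0.le htR
    have hb := fun n : ℤ => master_bound a hpos ha0 ht0 hsum hσt n
    exact Real.iSup_le (fun n => hb n) (le_trans (abs_nonneg _) (hb 0))

/-- Hayman's local central limit theorem, Theorem 3.2.3. If `f ∈ K` with
radius of convergence `R > 0` is strongly Gaussian, then
`lim_{t↑R} sup_{n∈ℤ} | (aₙ tⁿ/f(t))·√(2π)·σ_f(t) − e^{−(m_f(t)−n)²/(2σ_f²(t))} | = 0`,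
where `aₙ = 0` for `n < 0`. -/
theorem statement12 (a : ℕ → ℝ) (R : ℝ≥0∞) (hR : 0 < R)
    (hpos : ∀ n, 0 ≤ a n) (ha0 : 0 < a 0) (ha1 : ∃ n, 1 ≤ n ∧ 0 < a n)
    (hconv : ∀ t : ℝ, 0 ≤ t → ENNReal.ofReal t < R → Summable fun n => a n * t ^ n)
    (hdiv : ∀ t : ℝ, R < ENNReal.ofReal t → ¬ Summable fun n => a n * t ^ n)
    (hSG : StronglyGaussian a R) :
    Tendsto
      (fun t : ℝ =>
        ⨆ n : ℤ,
          |(if 0 ≤ n then a n.toNat * t ^ n.toNat else 0) / psum a t *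
                Real.sqrt (2 * Real.pi) * sdK a t -
              Real.exp (-(meanK a t - (n : ℝ)) ^ 2 / (2 * varK a t))|)
      (nhdsUpto R) (𝓝 0) :=
  statement12' a R hR hpos ha0 ha1 hconv hdiv hSG
end
end

section
/- (Hayman's asymptotic formula) Let f(z) = ∑_{n≥0} a_n z^n be a strongly Gaussian power series in the class K with radius of convergence R > 0. Then M_f = lim_{t↑R} m_f(t) = +∞, so for each n ≥ 1 there is a unique t_n ∈ (0,R) with m_f(t_n) = n, and a_n ~ (1/√(2π)) · f(t_n)/(σ_f(t_n) · t_n^n) as n → ∞. -/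
open Filter Topology MeasureTheory
open scoped ENNReal NNReal Classical

set_option maxHeartbeats 1000000

noncomputable section

namespace St13

/-- The set of valid parameters `t`. -/
def sset (R : ℝ≥0∞) : Set ℝ := {t | 0 < t ∧ ENNReal.ofReal t < R}

lemma exists_gt {R : ℝ≥0∞} {t : ℝ} (ht : 0 ≤ t) (h : ENNReal.ofReal t < R) :
    ∃ t', t < t' ∧ ENNReal.ofReal t' < R := by
  rcases eq_or_ne R ⊤ with hT | hT
  · exact ⟨t + 1, by linarith, by simp [hT]⟩
  · have htR : t < R.toReal := by
      rwa [← ENNReal.ofReal_lt_iff_lt_toReal ht hT]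
    refine ⟨(t + R.toReal) / 2, by linarith, ?_⟩
    rw [ENNReal.ofReal_lt_iff_lt_toReal (by linarith) hT]; linarith

lemma summable_pow_mul {a : ℕ → ℝ} {R : ℝ≥0∞} (hpos : ∀ n, 0 ≤ a n)
    (hconv : ∀ t : ℝ, 0 ≤ t → ENNReal.ofReal t < R → Summable fun n => a n * t ^ n)
    (p : ℕ) {t : ℝ} (ht : 0 ≤ t) (h : ENNReal.ofReal t < R) :
    Summable fun n : ℕ => (n : ℝ) ^ p * (a n * t ^ n) := by
  obtain ⟨t', htt', ht'⟩ := exists_gt ht h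
  have ht'0 : 0 < t' := lt_of_le_of_lt ht htt'
  have hs' : Summable fun n => a n * t' ^ n := hconv t' ht'0.le ht'
  set C : ℝ := ∑' n, a n * t' ^ n with hC
  have hterm : ∀ n, a n * t' ^ n ≤ C := fun n =>
    Summable.le_tsum hs' n fun m _ => mul_nonneg (hpos m) (by positivity)
  have hr : |t / t'| < 1 := by
    rw [abs_of_nonneg (by positivity)]
    rw [div_lt_one ht'0]; exact htt'
  have hgeo : Summable fun n : ℕ => C * ((n : ℝ) ^ p * (t / t') ^ n) :=
    (summable_pow_mul_geometric_of_norm_lt_one p (by rwa [Real.norm_eq_abs])).mul_left C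
  refine hgeo.of_nonneg_of_le (fun n => mul_nonneg (by positivity) (mul_nonneg (hpos n) (by positivity))) fun n => ?_
  have htn : t ^ n = t' ^ n * (t / t') ^ n := by
    rw [div_pow]
    field_simp
  calc (n : ℝ) ^ p * (a n * t ^ n) = (a n * t' ^ n) * ((n : ℝ) ^ p * (t / t') ^ n) := by
        rw [htn]; ring
    _ ≤ C * ((n : ℝ) ^ p * (t / t') ^ n) := by
        apply mul_le_mul_of_nonneg_right (hterm n) (by positivity)

lemma summable_base {a : ℕ → ℝ} {R : ℝ≥0∞} (hpos : ∀ n, 0 ≤ a n)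
    (hconv : ∀ t : ℝ, 0 ≤ t → ENNReal.ofReal t < R → Summable fun n => a n * t ^ n)
    {t : ℝ} (ht : 0 ≤ t) (h : ENNReal.ofReal t < R) :
    Summable fun n => a n * t ^ n := hconv t ht h

lemma summable_one {a : ℕ → ℝ} {R : ℝ≥0∞} (hpos : ∀ n, 0 ≤ a n)
    (hconv : ∀ t : ℝ, 0 ≤ t → ENNReal.ofReal t < R → Summable fun n => a n * t ^ n)
    {t : ℝ} (ht : 0 ≤ t) (h : ENNReal.ofReal t < R) :
    Summable fun n : ℕ => (n : ℝ) * a n * t ^ n := by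
  refine (summable_pow_mul hpos hconv 1 ht h).congr fun n => by ring

lemma summable_two {a : ℕ → ℝ} {R : ℝ≥0∞} (hpos : ∀ n, 0 ≤ a n)
    (hconv : ∀ t : ℝ, 0 ≤ t → ENNReal.ofReal t < R → Summable fun n => a n * t ^ n)
    {t : ℝ} (ht : 0 ≤ t) (h : ENNReal.ofReal t < R) :
    Summable fun n : ℕ => (n : ℝ) ^ 2 * a n * t ^ n := by
  refine (summable_pow_mul hpos hconv 2 ht h).congr fun n => by ring

variable {a : ℕ → ℝ} {R : ℝ≥0∞} {t : ℝ}

lemma psum_pos (hpos : ∀ n, 0 ≤ a n) (ha0 : 0 < a 0)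
    (hconv : ∀ t : ℝ, 0 ≤ t → ENNReal.ofReal t < R → Summable fun n => a n * t ^ n)
    (ht : 0 ≤ t) (h : ENNReal.ofReal t < R) : 0 < psum a t := by
  refine Summable.tsum_pos (hconv t ht h) (fun n => mul_nonneg (hpos n) (by positivity)) 0 (by simpa using ha0)

lemma S1_pos (hpos : ∀ n, 0 ≤ a n) (ha1 : ∃ n, 1 ≤ n ∧ 0 < a n)
    (hconv : ∀ t : ℝ, 0 ≤ t → ENNReal.ofReal t < R → Summable fun n => a n * t ^ n)
    (ht : 0 < t) (h : ENNReal.ofReal t < R) : 0 < ∑' n : ℕ, (n : ℝ) * a n * t ^ n := by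
  obtain ⟨m, hm1, hm⟩ := ha1
  refine Summable.tsum_pos (summable_one hpos hconv ht.le h)
    (fun n => mul_nonneg (mul_nonneg (by positivity) (hpos n)) (by positivity)) m ?_
  have : (0 : ℝ) < (m : ℝ) := by exact_mod_cast hm1
  positivity

/-- Derivative of a power series with nonnegative coefficients inside the radius. -/
lemma hasDerivAt_psumb (b : ℕ → ℝ) (hb : ∀ n, 0 ≤ b n)
    (hbs : ∀ u : ℝ, 0 ≤ u → ENNReal.ofReal u < R → Summable fun n => b n * u ^ n)
    (ht : 0 < t) (h : ENNReal.ofReal t < R) :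
    HasDerivAt (fun x => ∑' n : ℕ, b n * x ^ n) ((∑' n : ℕ, (n : ℝ) * b n * t ^ n) / t) t := by
  obtain ⟨t', htt', ht'⟩ := exists_gt ht.le h
  have ht'0 : 0 < t' := ht.trans htt'
  have hsum1 : Summable fun n : ℕ => (n : ℝ) ^ 1 * (b n * t' ^ n) :=
    summable_pow_mul hb hbs 1 ht'0.le ht'
  have hu : Summable fun n : ℕ => (n : ℝ) * b n * t' ^ (n - 1) := by
    refine (hsum1.mul_left (1 / t')).congr fun n => ?_
    rcases n with _ | n
    · simp
    · have hps : t' ^ (n + 1) = t' ^ n * t' := pow_succ _ _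
      simp only [Nat.add_sub_cancel, pow_one, hps]
      field_simp
  have key : HasDerivAt (fun x => ∑' n : ℕ, b n * x ^ n)
      (∑' n : ℕ, b n * ((n : ℕ) * t ^ (n - 1))) t := by
    refine hasDerivAt_tsum_of_isPreconnected hu isOpen_Ioo
      (convex_Ioo (-t') t').isPreconnected
      (g := fun n x => b n * x ^ n) (g' := fun n x => b n * ((n : ℕ) * x ^ (n - 1)))
      (fun n y _ => (hasDerivAt_pow n y).const_mul (b n)) (fun n y hy => ?_)
      (show t ∈ Set.Ioo (-t') t' from ⟨by linarith, htt'⟩)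
      (hbs t ht.le h) (show t ∈ Set.Ioo (-t') t' from ⟨by linarith, htt'⟩)
    have hyabs : |y| ≤ t' := by
      rw [abs_le]; exact ⟨hy.1.le, hy.2.le⟩
    have : ‖b n * ((n : ℕ) * y ^ (n - 1))‖ = b n * ((n : ℝ) * |y| ^ (n - 1)) := by
      rw [norm_mul, norm_mul, Real.norm_eq_abs, Real.norm_eq_abs, Real.norm_eq_abs,
        abs_of_nonneg (hb n), abs_of_nonneg (by positivity : (0:ℝ) ≤ (n:ℝ)), abs_pow]
    rw [this]
    have hple : |y| ^ (n - 1) ≤ t' ^ (n - 1) := pow_le_pow_left₀ (abs_nonneg y) hyabs _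
    calc b n * ((n : ℝ) * |y| ^ (n - 1)) ≤ b n * ((n : ℝ) * t' ^ (n - 1)) := by
          apply mul_le_mul_of_nonneg_left (mul_le_mul_of_nonneg_left hple (by positivity)) (hb n)
      _ = (n : ℝ) * b n * t' ^ (n - 1) := by ring
  convert key using 1
  rw [eq_comm, ← tsum_div_const]
  refine tsum_congr fun n => ?_
  rcases n with _ | n
  · simp
  · have hps : t ^ (n + 1) = t ^ n * t := pow_succ _ _
    simp only [Nat.add_sub_cancel, hps]
    field_simp

lemma hasDerivAt_S0 (hpos : ∀ n, 0 ≤ a n)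
    (hconv : ∀ t : ℝ, 0 ≤ t → ENNReal.ofReal t < R → Summable fun n => a n * t ^ n)
    (ht : 0 < t) (h : ENNReal.ofReal t < R) :
    HasDerivAt (psum a) ((∑' n : ℕ, (n : ℝ) * a n * t ^ n) / t) t :=
  hasDerivAt_psumb a hpos hconv ht h

lemma hasDerivAt_S1 (hpos : ∀ n, 0 ≤ a n)
    (hconv : ∀ t : ℝ, 0 ≤ t → ENNReal.ofReal t < R → Summable fun n => a n * t ^ n)
    (ht : 0 < t) (h : ENNReal.ofReal t < R) :
    HasDerivAt (fun x => ∑' n : ℕ, (n : ℝ) * a n * x ^ n)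
      ((∑' n : ℕ, (n : ℝ) ^ 2 * a n * t ^ n) / t) t := by
  have := hasDerivAt_psumb (R := R) (fun n => (n : ℝ) * a n)
    (fun n => mul_nonneg (by positivity) (hpos n))
    (fun u hu hRu => (summable_one hpos hconv hu hRu).congr fun n => by ring) ht h
  have e2 : (∑' n : ℕ, (n : ℝ) ^ 2 * a n * t ^ n)
      = ∑' n : ℕ, (n : ℝ) * ((n : ℝ) * a n) * t ^ n := tsum_congr fun n => by ring
  rw [e2]
  exact this

lemma hasDerivAt_meanK (hpos : ∀ n, 0 ≤ a n) (ha0 : 0 < a 0)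
    (hconv : ∀ t : ℝ, 0 ≤ t → ENNReal.ofReal t < R → Summable fun n => a n * t ^ n)
    (ht : 0 < t) (h : ENNReal.ofReal t < R) :
    HasDerivAt (meanK a)
      (((∑' n : ℕ, (n : ℝ) ^ 2 * a n * t ^ n) * psum a t
        - (∑' n : ℕ, (n : ℝ) * a n * t ^ n) ^ 2) / (t * psum a t ^ 2)) t := by
  have h0 := hasDerivAt_S0 hpos hconv ht h
  have h1 := hasDerivAt_S1 hpos hconv ht h
  have hp : psum a t ≠ 0 := (psum_pos hpos ha0 hconv ht.le h).ne'
  have := h1.div h0 hp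
  have e : meanK a = fun x => (∑' n : ℕ, (n : ℝ) * a n * x ^ n) / ∑' n : ℕ, a n * x ^ n := rfl
  rw [e]
  refine this.congr_deriv (Eq.symm ?_)
  have htne : t ≠ 0 := ht.ne'
  show _ = ((∑' n : ℕ, (n:ℝ)^2 * a n * t^n)/t * psum a t
      - (∑' n : ℕ, (n:ℝ) * a n * t^n) * ((∑' n : ℕ, (n:ℝ) * a n * t^n)/t)) / psum a t ^ 2
  field_simp

lemma quad_pos (hpos : ∀ n, 0 ≤ a n) (ha0 : 0 < a 0) (ha1 : ∃ n, 1 ≤ n ∧ 0 < a n)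
    (hconv : ∀ t : ℝ, 0 ≤ t → ENNReal.ofReal t < R → Summable fun n => a n * t ^ n)
    (ht : 0 < t) (h : ENNReal.ofReal t < R) :
    0 < (∑' n : ℕ, (n : ℝ) ^ 2 * a n * t ^ n) * psum a t
        - (∑' n : ℕ, (n : ℝ) * a n * t ^ n) ^ 2 := by
  set s0 := psum a t with hs0def
  set s1 := ∑' n : ℕ, (n : ℝ) * a n * t ^ n with hs1def
  set s2 := ∑' n : ℕ, (n : ℝ) ^ 2 * a n * t ^ n with hs2def
  have hs0 : 0 < s0 := psum_pos hpos ha0 hconv ht.le h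
  have hs1 : 0 < s1 := S1_pos hpos ha1 hconv ht h
  set m := s1 / s0 with hmdef
  have hm : 0 < m := div_pos hs1 hs0
  have hsum0 : Summable fun n : ℕ => a n * t ^ n := hconv t ht.le h
  have hsum1 : Summable fun n : ℕ => (n : ℝ) * a n * t ^ n := summable_one hpos hconv ht.le h
  have hsum2 : Summable fun n : ℕ => (n : ℝ) ^ 2 * a n * t ^ n := summable_two hpos hconv ht.le h
  have hsumq : Summable fun n : ℕ => ((n : ℝ) - m) ^ 2 * (a n * t ^ n) := by
    refine (((hsum2.sub (hsum1.mul_left (2 * m))).add (hsum0.mul_left (m ^ 2))).congr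
      fun n => ?_)
    ring
  have hkey : (∑' n : ℕ, ((n : ℝ) - m) ^ 2 * (a n * t ^ n))
      = s2 - 2 * m * s1 + m ^ 2 * s0 := by
    have e : ∀ n : ℕ, ((n : ℝ) - m) ^ 2 * (a n * t ^ n)
        = ((n : ℝ) ^ 2 * a n * t ^ n - 2 * m * ((n : ℝ) * a n * t ^ n))
          + m ^ 2 * (a n * t ^ n) := fun n => by ring
    rw [tsum_congr e, Summable.tsum_add (hsum2.sub (hsum1.mul_left _)) (hsum0.mul_left _),
      Summable.tsum_sub hsum2 (hsum1.mul_left _), tsum_mul_left, tsum_mul_left]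
    rfl
  have hterm : m ^ 2 * a 0 ≤ ∑' n : ℕ, ((n : ℝ) - m) ^ 2 * (a n * t ^ n) := by
    have := Summable.le_tsum hsumq 0 fun n _ => mul_nonneg (sq_nonneg _) (mul_nonneg (hpos n) (by positivity))
    simpa using this
  have hq : 0 < s2 - 2 * m * s1 + m ^ 2 * s0 := by
    rw [← hkey]
    have : (0:ℝ) < m ^ 2 * a 0 := by positivity
    linarith
  have hrw : s2 - 2 * m * s1 + m ^ 2 * s0 = (s2 * s0 - s1 ^ 2) / s0 := by
    rw [hmdef]; field_simp; ring
  rw [hrw] at hq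
  have := mul_pos hq hs0
  rwa [div_mul_cancel₀] at this
  exact hs0.ne'

lemma varK_eq (hpos : ∀ n, 0 ≤ a n) (ha0 : 0 < a 0)
    (hconv : ∀ t : ℝ, 0 ≤ t → ENNReal.ofReal t < R → Summable fun n => a n * t ^ n)
    (ht : 0 < t) (h : ENNReal.ofReal t < R) :
    varK a t = ((∑' n : ℕ, (n : ℝ) ^ 2 * a n * t ^ n) * psum a t
        - (∑' n : ℕ, (n : ℝ) * a n * t ^ n) ^ 2) / psum a t ^ 2 := by
  have hp : psum a t ≠ 0 := (psum_pos hpos ha0 hconv ht.le h).ne'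
  show (∑' n : ℕ, (n : ℝ) ^ 2 * a n * t ^ n) / psum a t - meanK a t ^ 2 = _
  show (∑' n : ℕ, (n : ℝ) ^ 2 * a n * t ^ n) / psum a t
    - ((∑' n : ℕ, (n : ℝ) * a n * t ^ n) / psum a t) ^ 2 = _
  field_simp

lemma varK_pos (hpos : ∀ n, 0 ≤ a n) (ha0 : 0 < a 0) (ha1 : ∃ n, 1 ≤ n ∧ 0 < a n)
    (hconv : ∀ t : ℝ, 0 ≤ t → ENNReal.ofReal t < R → Summable fun n => a n * t ^ n)
    (ht : 0 < t) (h : ENNReal.ofReal t < R) : 0 < varK a t := by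
  rw [varK_eq hpos ha0 hconv ht h]
  exact div_pos (quad_pos hpos ha0 ha1 hconv ht h)
    (pow_pos (psum_pos hpos ha0 hconv ht.le h) 2)

lemma sdK_pos (hpos : ∀ n, 0 ≤ a n) (ha0 : 0 < a 0) (ha1 : ∃ n, 1 ≤ n ∧ 0 < a n)
    (hconv : ∀ t : ℝ, 0 ≤ t → ENNReal.ofReal t < R → Summable fun n => a n * t ^ n)
    (ht : 0 < t) (h : ENNReal.ofReal t < R) : 0 < sdK a t :=
  Real.sqrt_pos.2 (varK_pos hpos ha0 ha1 hconv ht h)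

lemma sset_open : IsOpen (sset R) := by
  have : sset R = Set.Ioi 0 ∩ (fun t : ℝ => ENNReal.ofReal t) ⁻¹' (Set.Iio R) := rfl
  rw [this]
  exact isOpen_Ioi.inter (ENNReal.continuous_ofReal.isOpen_preimage _ isOpen_Iio)

lemma sset_convex : Convex ℝ (sset R) := by
  rw [convex_iff_ordConnected]
  constructor
  intro x hx y hy z hz
  exact ⟨lt_of_lt_of_le hx.1 hz.1, lt_of_le_of_lt (ENNReal.ofReal_le_ofReal hz.2) hy.2⟩

lemma strictMonoOn_meanK (hpos : ∀ n, 0 ≤ a n) (ha0 : 0 < a 0) (ha1 : ∃ n, 1 ≤ n ∧ 0 < a n)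
    (hconv : ∀ t : ℝ, 0 ≤ t → ENNReal.ofReal t < R → Summable fun n => a n * t ^ n) :
    StrictMonoOn (meanK a) (sset R) := by
  refine strictMonoOn_of_deriv_pos sset_convex ?_ ?_
  · intro x hx
    exact (hasDerivAt_meanK hpos ha0 hconv hx.1 hx.2).continuousAt.continuousWithinAt
  · intro x hx
    rw [sset_open.interior_eq] at hx
    rw [(hasDerivAt_meanK hpos ha0 hconv hx.1 hx.2).deriv]
    exact div_pos (quad_pos hpos ha0 ha1 hconv hx.1 hx.2)
      (mul_pos hx.1 (pow_pos (psum_pos hpos ha0 hconv hx.1.le hx.2) 2))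

lemma Fc_expand (a : ℕ → ℝ) (t x : ℝ) :
    Fc a ((t : ℂ) * Complex.exp (Complex.I * x)) =
      ∑' k : ℕ, ((a k * t ^ k : ℝ) : ℂ) * Complex.exp (Complex.I * k * x) := by
  unfold Fc
  refine tsum_congr fun k => ?_
  rw [mul_pow, show Complex.I * (k : ℂ) * (x : ℂ) = (k : ℕ) * (Complex.I * x) by push_cast; ring,
    Complex.exp_nat_mul]
  push_cast
  ring

lemma Fc_real (a : ℕ → ℝ) (t : ℝ) : Fc a ((t : ℝ) : ℂ) = ((psum a t : ℝ) : ℂ) := by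
  unfold Fc psum
  rw [Complex.ofReal_tsum]
  exact tsum_congr fun n => by push_cast; ring

lemma norm_aux (c : ℝ) (θ : ℝ) : ‖Complex.exp (Complex.I * c * θ)‖ = 1 := by
  rw [show Complex.I * (c : ℂ) * (θ : ℂ) = ((c * θ : ℝ) : ℂ) * Complex.I by push_cast; ring]
  rw [Complex.norm_exp_ofReal_mul_I]

/-- The Fourier coefficient computation: `∫_{-π}^{π} f(t e^{iθ}) e^{-inθ} dθ = 2π aₙ tⁿ`. -/
lemma fourier_coeff (hpos : ∀ n, 0 ≤ a n)
    (hconv : ∀ t : ℝ, 0 ≤ t → ENNReal.ofReal t < R → Summable fun n => a n * t ^ n)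
    (ht : 0 ≤ t) (h : ENNReal.ofReal t < R) (n : ℕ) :
    ∫ θ in (-Real.pi)..Real.pi,
        Fc a ((t : ℂ) * Complex.exp (Complex.I * θ)) * Complex.exp (-(Complex.I * n * θ))
      = 2 * Real.pi * ((a n * t ^ n : ℝ) : ℂ) := by
  have hsum : Summable fun k : ℕ => a k * t ^ k := hconv t ht h
  have hle : -Real.pi ≤ Real.pi := by linarith [Real.pi_pos]
  set F : ℕ → ℝ → ℂ := fun k θ =>
    ((a k * t ^ k : ℝ) : ℂ) * Complex.exp (Complex.I * Complex.ofReal ((k : ℝ) - (n : ℝ)) * θ) with hF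
  have hcont : ∀ k, Continuous (F k) := by
    intro k
    apply continuous_const.mul
    exact Complex.continuous_exp.comp (continuous_const.mul Complex.continuous_ofReal)
  have hnorm : ∀ k θ, ‖F k θ‖ = a k * t ^ k := by
    intro k θ
    rw [hF]
    simp only [norm_mul]
    rw [show (Complex.I * (((k : ℝ) - n : ℝ) : ℂ) * (θ : ℂ)) =
      Complex.I * (((k : ℝ) - n : ℝ) : ℂ) * (θ : ℂ) from rfl]
    rw [norm_aux ((k : ℝ) - n) θ, mul_one, Complex.norm_real, Real.norm_eq_abs,
      abs_of_nonneg (mul_nonneg (hpos k) (by positivity))]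
  -- pointwise expansion of the integrand
  have hpt : ∀ θ : ℝ,
      Fc a ((t : ℂ) * Complex.exp (Complex.I * θ)) * Complex.exp (-(Complex.I * n * θ))
        = ∑' k : ℕ, F k θ := by
    intro θ
    rw [Fc_expand, ← tsum_mul_right]
    refine tsum_congr fun k => ?_
    rw [mul_assoc, ← Complex.exp_add]
    congr 2
    push_cast
    ring
  -- swap sum and integral
  have hint : ∀ k, Integrable (F k) (volume.restrict (Set.Ioc (-Real.pi) Real.pi)) :=
    fun k => (hcont k).integrableOn_Ioc
  have hintnorm : Summable fun k => ∫ θ in Set.Ioc (-Real.pi) Real.pi, ‖F k θ‖ := by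
    have : ∀ k, (∫ θ in Set.Ioc (-Real.pi) Real.pi, ‖F k θ‖) = a k * t ^ k * (2 * Real.pi) := by
      intro k
      simp_rw [hnorm k]
      rw [setIntegral_const, measureReal_def, Real.volume_Ioc, smul_eq_mul, mul_comm,
        ENNReal.toReal_ofReal (by linarith [Real.pi_pos])]
      ring_nf
    rw [funext this]
    exact hsum.mul_right _
  have hswap := MeasureTheory.integral_tsum_of_summable_integral_norm hint hintnorm
  -- compute each integral
  have hval : ∀ k : ℕ, (∫ θ in Set.Ioc (-Real.pi) Real.pi, F k θ)
      = if k = n then 2 * Real.pi * ((a n * t ^ n : ℝ) : ℂ) else 0 := by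
    intro k
    rcases eq_or_ne k n with hk | hk
    · subst hk
      rw [if_pos rfl]
      simp only [hF, sub_self, Complex.ofReal_zero, mul_zero, zero_mul, Complex.exp_zero, mul_one]
      rw [setIntegral_const, measureReal_def, Real.volume_Ioc, ENNReal.toReal_ofReal (by linarith [Real.pi_pos])]
      rw [show Real.pi - -Real.pi = 2 * Real.pi by ring]
      rw [Complex.real_smul]
      push_cast
      ring
    · rw [if_neg hk, ← intervalIntegral.integral_of_le hle]
      have hc : (Complex.I * Complex.ofReal ((k : ℝ) - (n : ℝ))) ≠ 0 := by
        apply mul_ne_zero Complex.I_ne_zero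
        simp only [ne_eq, Complex.ofReal_eq_zero, sub_eq_zero]
        exact_mod_cast fun hkn => hk (by exact_mod_cast hkn)
      simp only [hF]
      rw [intervalIntegral.integral_const_mul, integral_exp_mul_complex hc]
      have hexp : Complex.exp (Complex.I * Complex.ofReal ((k : ℝ) - (n : ℝ)) * (Real.pi : ℂ))
          = Complex.exp (Complex.I * Complex.ofReal ((k : ℝ) - (n : ℝ)) * ((-Real.pi : ℝ) : ℂ)) := by
        rw [Complex.exp_eq_exp_iff_exists_int]
        exact ⟨(k : ℤ) - n, by push_cast; ring⟩
      rw [hexp]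
      simp
  -- conclude
  rw [intervalIntegral.integral_of_le hle]
  calc (∫ θ in Set.Ioc (-Real.pi) Real.pi,
        Fc a ((t : ℂ) * Complex.exp (Complex.I * θ)) * Complex.exp (-(Complex.I * n * θ)))
      = ∫ θ in Set.Ioc (-Real.pi) Real.pi, ∑' k : ℕ, F k θ := by
        exact setIntegral_congr_fun measurableSet_Ioc fun θ _ => hpt θ
    _ = ∑' k : ℕ, ∫ θ in Set.Ioc (-Real.pi) Real.pi, F k θ := hswap.symm
    _ = 2 * Real.pi * ((a n * t ^ n : ℝ) : ℂ) := by
        rw [tsum_congr hval, tsum_ite_eq]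

lemma norm_exp_I_mul (x : ℝ) : ‖Complex.exp (Complex.I * (x : ℂ))‖ = 1 := by
  rw [show Complex.I * (x : ℂ) = (x : ℂ) * Complex.I by ring,
    Complex.norm_exp_ofReal_mul_I]

lemma charN_continuous (hsum : Summable fun k : ℕ => a k * t ^ k)
    (hpos : ∀ n, 0 ≤ a n) (ht : 0 ≤ t) : Continuous (charN a t) := by
  have he : charN a t = fun u =>
      (∑' k : ℕ, ((a k * t ^ k : ℝ) : ℂ) *
        Complex.exp (Complex.I * k * ((u / sdK a t : ℝ) : ℂ))) / Fc a (t : ℂ) *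
        Complex.exp (-Complex.I * ((u * meanK a t / sdK a t : ℝ) : ℂ)) := by
    funext u
    unfold charN
    rw [Fc_expand]
  rw [he]
  have h1 : Continuous fun u : ℝ => ∑' k : ℕ, ((a k * t ^ k : ℝ) : ℂ) *
      Complex.exp (Complex.I * k * ((u / sdK a t : ℝ) : ℂ)) := by
    refine continuous_tsum (fun k => ?_) hsum (fun k u => ?_)
    · exact continuous_const.mul (Complex.continuous_exp.comp
        (continuous_const.mul (Complex.continuous_ofReal.comp (continuous_id.div_const _))))
    · rw [norm_mul, show Complex.I * (k : ℂ) * ((u / sdK a t : ℝ) : ℂ) =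
        Complex.I * (((k : ℝ) * (u / sdK a t) : ℝ) : ℂ) by push_cast; ring,
        norm_exp_I_mul, mul_one, Complex.norm_real, Real.norm_eq_abs,
        abs_of_nonneg (mul_nonneg (hpos k) (by positivity))]
  refine (h1.div_const _).mul (Complex.continuous_exp.comp ?_)
  exact continuous_const.mul (Complex.continuous_ofReal.comp
    ((continuous_id.mul continuous_const).div_const _))

/-- The key integral identity obtained by substitution from the Fourier coefficient formula. -/
lemma key_integral (hpos : ∀ n, 0 ≤ a n) (ha0 : 0 < a 0)
    (hconv : ∀ t : ℝ, 0 ≤ t → ENNReal.ofReal t < R → Summable fun n => a n * t ^ n)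
    (ht : 0 < t) (h : ENNReal.ofReal t < R) (hσ : 0 < sdK a t) (n : ℕ) :
    ∫ u in (-(Real.pi * sdK a t))..(Real.pi * sdK a t),
        charN a t u * Complex.exp (Complex.I * (((meanK a t - n) * u / sdK a t : ℝ) : ℂ))
      = 2 * Real.pi * sdK a t * ((a n * t ^ n : ℝ) : ℂ) / ((psum a t : ℝ) : ℂ) := by
  set σ := sdK a t with hσdef
  set m := meanK a t with hmdef
  set g : ℝ → ℂ := fun u => charN a t u * Complex.exp (Complex.I * (((m - n) * u / σ : ℝ) : ℂ))
    with hg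
  have hσne : σ ≠ 0 := hσ.ne'
  have comp := intervalIntegral.integral_comp_mul_left (a := -Real.pi) (b := Real.pi) g hσne
  -- compute g (σ * x)
  have hgval : ∀ x : ℝ, g (σ * x) =
      Fc a ((t : ℂ) * Complex.exp (Complex.I * x)) * Complex.exp (-(Complex.I * n * x))
        / ((psum a t : ℝ) : ℂ) := by
    intro x
    rw [hg]
    show charN a t (σ * x) * _ = _
    unfold charN
    rw [← hσdef, ← hmdef]
    have e1 : (σ * x / σ : ℝ) = x := by field_simp
    have e2 : ((m - n) * (σ * x) / σ : ℝ) = (m - n) * x := by field_simp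
    have e3 : (σ * x * m / σ : ℝ) = x * m := by field_simp
    rw [e1, e2, e3, Fc_real]
    have he : -Complex.I * ((x * m : ℝ) : ℂ) + Complex.I * (((m - (n:ℝ)) * x : ℝ) : ℂ)
        = -(Complex.I * n * x) := by push_cast; ring
    rw [mul_assoc, ← Complex.exp_add, he, div_mul_eq_mul_div]
  have hpi : ∀ x ∈ Set.uIcc (-Real.pi) Real.pi, True := fun _ _ => trivial
  -- rewrite comp
  have comp2 : (∫ x in (-Real.pi)..Real.pi, g (σ * x))
      = σ⁻¹ • ∫ u in (σ * -Real.pi)..(σ * Real.pi), g u := comp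
  have hend1 : σ * -Real.pi = -(Real.pi * σ) := by ring
  have hend2 : σ * Real.pi = Real.pi * σ := by ring
  rw [hend1, hend2] at comp2
  have lhs_eq : (∫ x in (-Real.pi)..Real.pi, g (σ * x))
      = 2 * Real.pi * ((a n * t ^ n : ℝ) : ℂ) / ((psum a t : ℝ) : ℂ) := by
    rw [intervalIntegral.integral_congr (g := fun x : ℝ =>
      Fc a ((t : ℂ) * Complex.exp (Complex.I * x)) * Complex.exp (-(Complex.I * n * x))
        / ((psum a t : ℝ) : ℂ)) (fun x _ => hgval x)]
    rw [intervalIntegral.integral_div, fourier_coeff hpos hconv ht.le h n]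
  rw [lhs_eq] at comp2
  -- solve for the integral
  have : σ • ((2 : ℂ) * Real.pi * ((a n * t ^ n : ℝ) : ℂ) / ((psum a t : ℝ) : ℂ))
      = σ • (σ⁻¹ • ∫ u in (-(Real.pi * σ))..(Real.pi * σ), g u) := by rw [← comp2]
  rw [smul_inv_smul₀ (by exact_mod_cast hσne : (σ : ℝ) ≠ 0)] at this
  rw [← this, Complex.real_smul]
  push_cast
  ring

lemma gauss_fun_eq : (fun θ : ℝ => Real.exp (-θ ^ 2 / 2))
    = fun θ : ℝ => Real.exp (-(1/2) * θ ^ 2) := by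
  funext x; congr 1; ring

lemma gauss_integrable : Integrable (fun θ : ℝ => Real.exp (-θ ^ 2 / 2)) := by
  rw [gauss_fun_eq]; exact integrable_exp_neg_mul_sq (by norm_num)

lemma gauss_total : (∫ θ : ℝ, Real.exp (-θ ^ 2 / 2)) = Real.sqrt (2 * Real.pi) := by
  rw [gauss_fun_eq, integral_gaussian, show Real.pi / (1/2 : ℝ) = 2 * Real.pi by ring]

lemma gauss_interval_le (c d : ℝ) : ∫ θ in c..d, Real.exp (-θ ^ 2 / 2) ≤ Real.sqrt (2 * Real.pi) := by
  have hint := gauss_integrable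
  have hval := gauss_total
  rcases le_or_gt c d with hcd | hcd
  · rw [intervalIntegral.integral_of_le hcd, ← hval]
    exact setIntegral_le_integral hint (Eventually.of_forall fun x => (Real.exp_pos _).le)
  · rw [intervalIntegral.integral_of_ge hcd.le]
    rw [← hval]
    have h1 : (0:ℝ) ≤ ∫ θ in Set.Ioc d c, Real.exp (-θ ^ 2 / 2) :=
      setIntegral_nonneg measurableSet_Ioc fun x _ => (Real.exp_pos _).le
    have h2 : (0:ℝ) ≤ ∫ θ : ℝ, Real.exp (-θ ^ 2 / 2) :=
      integral_nonneg fun x => (Real.exp_pos _).le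
    linarith

/-- Bound on the coefficients from the strongly Gaussian integral. -/
lemma coeff_bound (hpos : ∀ n, 0 ≤ a n) (ha0 : 0 < a 0)
    (hconv : ∀ t : ℝ, 0 ≤ t → ENNReal.ofReal t < R → Summable fun n => a n * t ^ n)
    (ht : 0 < t) (h : ENNReal.ofReal t < R) (hσ : 0 < sdK a t) (n : ℕ) :
    a n * t ^ n / psum a t ≤
      ((∫ θ in (-(Real.pi * sdK a t))..(Real.pi * sdK a t),
        ‖charN a t θ - ((Real.exp (-θ ^ 2 / 2) : ℝ) : ℂ)‖) + Real.sqrt (2 * Real.pi))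
        / (2 * Real.pi * sdK a t) := by
  set σ := sdK a t with hσdef
  set m := meanK a t with hmdef
  have hπσ : (0:ℝ) < 2 * Real.pi * σ := by positivity
  have hple : -(Real.pi * σ) ≤ Real.pi * σ := by nlinarith [Real.pi_pos]
  have hpps := psum_pos hpos ha0 hconv ht.le h
  rw [div_le_div_iff₀ hpps hπσ]
  set ph : ℝ → ℂ := fun u => Complex.exp (Complex.I * (((m - n) * u / σ : ℝ) : ℂ)) with hph
  have hphnorm : ∀ u, ‖ph u‖ = 1 := fun u => norm_exp_I_mul _
  have hKI := key_integral hpos ha0 hconv ht h hσ n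
  have hnormval : ‖∫ u in (-(Real.pi * σ))..(Real.pi * σ), charN a t u * ph u‖
      = 2 * Real.pi * σ * (a n * t ^ n) / psum a t := by
    rw [hKI]
    rw [show (2 : ℂ) * Real.pi * σ * ((a n * t ^ n : ℝ) : ℂ) / ((psum a t : ℝ) : ℂ)
      = (((2 * Real.pi * σ * (a n * t ^ n) / psum a t : ℝ)) : ℂ) by push_cast; ring]
    rw [Complex.norm_real, Real.norm_eq_abs, abs_of_nonneg
      (div_nonneg (mul_nonneg (by positivity) (mul_nonneg (hpos n) (by positivity))) hpps.le)]
  -- split the integral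
  have hcc : Continuous (charN a t) := charN_continuous (hconv t ht.le h) hpos ht.le
  have hgc : Continuous fun θ : ℝ => ((Real.exp (-θ ^ 2 / 2) : ℝ) : ℂ) := by
    apply Complex.continuous_ofReal.comp
    exact Real.continuous_exp.comp (by continuity)
  have hphc : Continuous ph := by
    apply Complex.continuous_exp.comp
    exact continuous_const.mul (Complex.continuous_ofReal.comp (by continuity))
  have hsplit : (∫ u in (-(Real.pi * σ))..(Real.pi * σ), charN a t u * ph u)
      = (∫ u in (-(Real.pi * σ))..(Real.pi * σ),
          (charN a t u - ((Real.exp (-u ^ 2 / 2) : ℝ) : ℂ)) * ph u)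
        + ∫ u in (-(Real.pi * σ))..(Real.pi * σ), ((Real.exp (-u ^ 2 / 2) : ℝ) : ℂ) * ph u := by
    rw [← intervalIntegral.integral_add
      (f := fun u => (charN a t u - ((Real.exp (-u ^ 2 / 2) : ℝ) : ℂ)) * ph u)
      (g := fun u => ((Real.exp (-u ^ 2 / 2) : ℝ) : ℂ) * ph u)
      (((hcc.sub hgc).mul hphc).intervalIntegrable _ _)
      ((hgc.mul hphc).intervalIntegrable _ _)]
    exact intervalIntegral.integral_congr fun u _ => by ring
  have hb1 : ‖∫ u in (-(Real.pi * σ))..(Real.pi * σ),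
      (charN a t u - ((Real.exp (-u ^ 2 / 2) : ℝ) : ℂ)) * ph u‖
      ≤ ∫ θ in (-(Real.pi * σ))..(Real.pi * σ),
          ‖charN a t θ - ((Real.exp (-θ ^ 2 / 2) : ℝ) : ℂ)‖ := by
    refine le_trans (intervalIntegral.norm_integral_le_integral_norm hple) ?_
    refine le_of_eq (intervalIntegral.integral_congr fun u _ => ?_)
    rw [norm_mul, hphnorm, mul_one]
  have hb2 : ‖∫ u in (-(Real.pi * σ))..(Real.pi * σ),
      ((Real.exp (-u ^ 2 / 2) : ℝ) : ℂ) * ph u‖ ≤ Real.sqrt (2 * Real.pi) := by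
    refine le_trans (intervalIntegral.norm_integral_le_integral_norm hple) ?_
    have : (∫ u in (-(Real.pi * σ))..(Real.pi * σ),
        ‖((Real.exp (-u ^ 2 / 2) : ℝ) : ℂ) * ph u‖)
        = ∫ u in (-(Real.pi * σ))..(Real.pi * σ), Real.exp (-u ^ 2 / 2) := by
      refine intervalIntegral.integral_congr fun u _ => ?_
      rw [norm_mul, hphnorm, mul_one, Complex.norm_real, Real.norm_eq_abs,
        abs_of_nonneg (Real.exp_pos _).le]
    rw [this]
    exact gauss_interval_le _ _
  have main : 2 * Real.pi * σ * (a n * t ^ n) / psum a t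
      ≤ (∫ θ in (-(Real.pi * σ))..(Real.pi * σ),
          ‖charN a t θ - ((Real.exp (-θ ^ 2 / 2) : ℝ) : ℂ)‖) + Real.sqrt (2 * Real.pi) := by
    rw [← hnormval, hsplit]
    exact le_trans (norm_add_le _ _) (add_le_add hb1 hb2)
  have hmul := mul_le_mul_of_nonneg_right main hpps.le
  rw [div_mul_cancel₀ _ hpps.ne'] at hmul
  calc a n * t ^ n * (2 * Real.pi * σ) = 2 * Real.pi * σ * (a n * t ^ n) := by ring
    _ ≤ _ := hmul

lemma ofReal_lt_toReal {t : ℝ} (ht : 0 ≤ t) (hRtop : R ≠ ⊤) (h : ENNReal.ofReal t < R) :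
    t < R.toReal := by rwa [← ENNReal.ofReal_lt_iff_lt_toReal ht hRtop]

/-- Markov-type inequality: most of the mass is on indices below `N` when `m(t) ≤ N`. -/
lemma markov (hpos : ∀ n, 0 ≤ a n) (ha0 : 0 < a 0)
    (hconv : ∀ t : ℝ, 0 ≤ t → ENNReal.ofReal t < R → Summable fun n => a n * t ^ n)
    (ht : 0 < t) (h : ENNReal.ofReal t < R) (N : ℕ) (hN : 1 ≤ N) :
    (1 - meanK a t / N) * psum a t ≤ ∑ k ∈ Finset.range N, a k * t ^ k := by
  have hsum : Summable fun n : ℕ => a n * t ^ n := hconv t ht.le h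
  have hsum1 : Summable fun n : ℕ => (n : ℝ) * a n * t ^ n := summable_one hpos hconv ht.le h
  have hpp : 0 < psum a t := psum_pos hpos ha0 hconv ht.le h
  have hNpos : (0:ℝ) < N := by exact_mod_cast hN
  have hsplit : (∑ k ∈ Finset.range N, a k * t ^ k) + (∑' k : ℕ, a (k + N) * t ^ (k + N))
      = psum a t := Summable.sum_add_tsum_nat_add N hsum
  have hsplit1 : (∑ k ∈ Finset.range N, (k : ℝ) * a k * t ^ k)
      + (∑' k : ℕ, ((k + N : ℕ) : ℝ) * a (k + N) * t ^ (k + N))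
      = ∑' n : ℕ, (n : ℝ) * a n * t ^ n := Summable.sum_add_tsum_nat_add N hsum1
  have htail1nn : 0 ≤ ∑ k ∈ Finset.range N, (k : ℝ) * a k * t ^ k :=
    Finset.sum_nonneg fun k _ => mul_nonneg (mul_nonneg (by positivity) (hpos k)) (by positivity)
  have htailsum : Summable fun k : ℕ => a (k + N) * t ^ (k + N) :=
    (summable_nat_add_iff N).2 hsum
  have htailsum1 : Summable fun k : ℕ => ((k + N : ℕ) : ℝ) * a (k + N) * t ^ (k + N) :=
    (summable_nat_add_iff N).2 hsum1
  have htail_le : (∑' k : ℕ, a (k + N) * t ^ (k + N))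
      ≤ (∑' k : ℕ, ((k + N : ℕ) : ℝ) * a (k + N) * t ^ (k + N)) / N := by
    rw [← tsum_div_const]
    refine Summable.tsum_le_tsum (fun k => ?_) htailsum (htailsum1.div_const _)
    rw [le_div_iff₀ hNpos]
    have h1 : (N : ℝ) ≤ ((k + N : ℕ) : ℝ) := by push_cast; linarith [Nat.cast_nonneg (α := ℝ) k]
    have h2 : 0 ≤ a (k + N) * t ^ (k + N) := mul_nonneg (hpos _) (by positivity)
    nlinarith
  have hS1 : (∑' n : ℕ, (n : ℝ) * a n * t ^ n) = meanK a t * psum a t := by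
    have hpne : (∑' n : ℕ, a n * t ^ n) ≠ 0 := hpp.ne'
    unfold meanK psum
    rw [div_mul_cancel₀ _ hpne]
  have : (∑' k : ℕ, ((k + N : ℕ) : ℝ) * a (k + N) * t ^ (k + N))
      ≤ meanK a t * psum a t := by
    rw [← hS1]
    linarith [hsplit1, htail1nn]
  have hN' : (∑' k : ℕ, a (k + N) * t ^ (k + N)) ≤ meanK a t * psum a t / N :=
    le_trans htail_le ((div_le_div_iff_of_pos_right hNpos).2 this)
  have := hsplit
  have hgoal : psum a t - meanK a t * psum a t / N ≤ ∑ k ∈ Finset.range N, a k * t ^ k := by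
    linarith
  calc (1 - meanK a t / N) * psum a t = psum a t - meanK a t * psum a t / N := by ring
    _ ≤ _ := hgoal

lemma nhdsUpto_neBot (hR : 0 < R) : (nhdsUpto R).NeBot := by
  unfold nhdsUpto
  split_ifs with h
  · exact atTop_neBot
  · exact nhdsLT_neBot _

lemma eventually_mem_sset (hR : 0 < R) : ∀ᶠ t in nhdsUpto R, t ∈ sset R := by
  unfold nhdsUpto
  split_ifs with h
  · exact (eventually_gt_atTop 0).mono fun t ht => ⟨ht, by simp [h]⟩
  · have hrr : 0 < R.toReal := ENNReal.toReal_pos hR.ne' h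
    filter_upwards [Ioo_mem_nhdsLT_of_mem (Set.right_mem_Ioc.2 hrr)] with x hx
    exact ⟨hx.1, by rw [ENNReal.ofReal_lt_iff_lt_toReal hx.1.le h]; exact hx.2⟩

lemma eventually_gt_nhdsUpto (hR : 0 < R) {c : ℝ} (hc : c ∈ sset R) :
    ∀ᶠ t in nhdsUpto R, c < t := by
  unfold nhdsUpto
  split_ifs with h
  · exact eventually_gt_atTop c
  · have hcr : c < R.toReal := ofReal_lt_toReal hc.1.le h hc.2
    filter_upwards [Ioo_mem_nhdsLT_of_mem (Set.right_mem_Ioc.2 hcr)] with x hx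
    exact hx.1

lemma sset_nonempty (hR : 0 < R) : ∃ c, c ∈ sset R := by
  rcases eq_or_ne R ⊤ with h | h
  · exact ⟨1, one_pos, by simp [h]⟩
  · refine ⟨R.toReal / 2, ?_, ?_⟩
    · have := ENNReal.toReal_pos hR.ne' h
      linarith
    · rw [ENNReal.ofReal_lt_iff_lt_toReal (by positivity) h]
      have := ENNReal.toReal_pos hR.ne' h
      linarith

lemma meanK_unbounded (hpos : ∀ n, 0 ≤ a n) (ha0 : 0 < a 0)
    (hconv : ∀ t : ℝ, 0 ≤ t → ENNReal.ofReal t < R → Summable fun n => a n * t ^ n)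
    (hR : 0 < R)
    (hsd : Tendsto (sdK a) (nhdsUpto R) atTop)
    (hI : Tendsto (fun t => ∫ θ in (-(Real.pi * sdK a t))..(Real.pi * sdK a t),
        ‖charN a t θ - ((Real.exp (-θ ^ 2 / 2) : ℝ) : ℂ)‖) (nhdsUpto R) (𝓝 0)) :
    ∀ M : ℝ, ∃ c ∈ sset R, M < meanK a c := by
  intro M
  by_contra hcon
  push_neg at hcon
  set M' := max M 1 with hM'def
  have hM'1 : (1:ℝ) ≤ M' := le_max_right _ _
  set N := ⌈2 * M'⌉₊ with hNdef
  have hN2M : 2 * M' ≤ (N : ℝ) := Nat.le_ceil _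
  have hN1 : 1 ≤ N := by
    have h1 : (1:ℝ) ≤ (N:ℝ) := by linarith
    exact_mod_cast h1
  have hNpos : (0:ℝ) < (N:ℝ) := by
    have : (0:ℝ) < 1 := one_pos
    have h1 : (1:ℝ) ≤ (N:ℝ) := by exact_mod_cast hN1
    linarith
  set Itv : ℝ → ℝ := fun t => ∫ θ in (-(Real.pi * sdK a t))..(Real.pi * sdK a t),
      ‖charN a t θ - ((Real.exp (-θ ^ 2 / 2) : ℝ) : ℂ)‖ with hItv
  set ε : ℝ → ℝ := fun t => (Itv t + Real.sqrt (2 * Real.pi)) / (2 * Real.pi * sdK a t) with hε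
  have hpoint : ∀ t, t ∈ sset R → 0 < sdK a t → 1 / 2 ≤ (N:ℝ) * ε t := by
    intro t hts hσ
    have hpp := psum_pos hpos ha0 hconv hts.1.le hts.2
    have hcb : ∀ k : ℕ, a k * t ^ k ≤ ε t * psum a t := by
      intro k
      have hb := coeff_bound hpos ha0 hconv hts.1 hts.2 hσ k
      calc a k * t ^ k = a k * t ^ k / psum a t * psum a t := by field_simp
        _ ≤ ε t * psum a t := mul_le_mul_of_nonneg_right hb hpp.le
    have hsum_le : (∑ k ∈ Finset.range N, a k * t ^ k) ≤ (N:ℝ) * (ε t * psum a t) := by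
      calc (∑ k ∈ Finset.range N, a k * t ^ k) ≤ ∑ _k ∈ Finset.range N, ε t * psum a t :=
            Finset.sum_le_sum fun k _ => hcb k
        _ = (N:ℝ) * (ε t * psum a t) := by
            rw [Finset.sum_const, Finset.card_range, nsmul_eq_mul]
    have hmkv := markov hpos ha0 hconv hts.1 hts.2 N hN1
    have hm_le : meanK a t ≤ M' := le_trans (hcon t hts) (le_max_left _ _)
    have h3 : (1 - M' / N) * psum a t ≤ (1 - meanK a t / N) * psum a t := by
      apply mul_le_mul_of_nonneg_right _ hpp.le
      have := (div_le_div_iff_of_pos_right hNpos).2 hm_le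
      linarith
    have h4 : 1 - M' / N ≤ (N:ℝ) * ε t := by
      have h5 : (1 - M' / N) * psum a t ≤ (N:ℝ) * ε t * psum a t := by
        calc (1 - M' / N) * psum a t ≤ (1 - meanK a t / N) * psum a t := h3
          _ ≤ ∑ k ∈ Finset.range N, a k * t ^ k := hmkv
          _ ≤ (N:ℝ) * (ε t * psum a t) := hsum_le
          _ = (N:ℝ) * ε t * psum a t := by ring
      exact le_of_mul_le_mul_right h5 hpp
    have h6 : 1 / 2 ≤ 1 - M' / N := by
      have : M' / N ≤ 1 / 2 := by rw [div_le_iff₀ hNpos]; linarith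
      linarith
    linarith
  have hlim : Tendsto (fun t => (N:ℝ) * ε t) (nhdsUpto R) (𝓝 0) := by
    have h1 : Tendsto (fun t => Itv t + Real.sqrt (2 * Real.pi)) (nhdsUpto R)
        (𝓝 (0 + Real.sqrt (2 * Real.pi))) := hI.add tendsto_const_nhds
    have h2 : Tendsto (fun t => (2 * Real.pi * sdK a t)⁻¹) (nhdsUpto R) (𝓝 0) := by
      apply Tendsto.inv_tendsto_atTop
      exact hsd.const_mul_atTop (by positivity)
    have h3 := h1.mul h2
    rw [mul_zero] at h3
    have h4 : (fun t => (N:ℝ) * ε t)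
        = fun t => (N:ℝ) * ((Itv t + Real.sqrt (2 * Real.pi)) * (2 * Real.pi * sdK a t)⁻¹) := by
      funext t
      show (N:ℝ) * ((Itv t + Real.sqrt (2 * Real.pi)) / (2 * Real.pi * sdK a t))
        = (N:ℝ) * ((Itv t + Real.sqrt (2 * Real.pi)) * (2 * Real.pi * sdK a t)⁻¹)
      rw [div_eq_mul_inv]
    rw [h4]
    have := h3.const_mul (N:ℝ)
    rwa [mul_zero] at this
  have hev1 := eventually_mem_sset (R := R) hR
  have hev2 : ∀ᶠ t in nhdsUpto R, (1:ℝ) ≤ sdK a t := hsd.eventually_ge_atTop 1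
  have hev3 : ∀ᶠ t in nhdsUpto R, (N:ℝ) * ε t < 1 / 2 :=
    hlim.eventually_lt_const (by norm_num)
  have hne : (nhdsUpto R).NeBot := nhdsUpto_neBot hR
  obtain ⟨t, h1, h2, h3⟩ := (hev1.and (hev2.and hev3)).exists
  exact absurd (hpoint t h1 (lt_of_lt_of_le one_pos h2)) (not_le.2 h3)

lemma meanK_tendsto (hpos : ∀ n, 0 ≤ a n) (ha0 : 0 < a 0) (ha1 : ∃ n, 1 ≤ n ∧ 0 < a n)
    (hconv : ∀ t : ℝ, 0 ≤ t → ENNReal.ofReal t < R → Summable fun n => a n * t ^ n)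
    (hR : 0 < R)
    (hsd : Tendsto (sdK a) (nhdsUpto R) atTop)
    (hI : Tendsto (fun t => ∫ θ in (-(Real.pi * sdK a t))..(Real.pi * sdK a t),
        ‖charN a t θ - ((Real.exp (-θ ^ 2 / 2) : ℝ) : ℂ)‖) (nhdsUpto R) (𝓝 0)) :
    Tendsto (meanK a) (nhdsUpto R) atTop := by
  rw [tendsto_atTop]
  intro b
  obtain ⟨c, hcs, hbc⟩ := meanK_unbounded hpos ha0 hconv hR hsd hI b
  filter_upwards [eventually_mem_sset hR, eventually_gt_nhdsUpto hR hcs] with t hts hct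
  exact le_of_lt (lt_trans hbc (strictMonoOn_meanK hpos ha0 ha1 hconv hcs hts hct))

lemma exists_small (hpos : ∀ n, 0 ≤ a n) (ha0 : 0 < a 0)
    (hconv : ∀ t : ℝ, 0 ≤ t → ENNReal.ofReal t < R → Summable fun n => a n * t ^ n)
    (hR : 0 < R) : ∃ c ∈ sset R, meanK a c < 1 := by
  obtain ⟨c0, hc0⟩ := sset_nonempty hR
  have hc00 : 0 < c0 := hc0.1
  set K := (∑' n : ℕ, (n:ℝ) * a n * c0 ^ n) / (c0 * a 0) with hKdef
  have hS1c0 : 0 ≤ ∑' n : ℕ, (n:ℝ) * a n * c0 ^ n :=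
    tsum_nonneg fun n => mul_nonneg (mul_nonneg (by positivity) (hpos n)) (by positivity)
  have hKnn : 0 ≤ K := div_nonneg hS1c0 (by positivity)
  set t := min c0 (1 / (2 * (K + 1))) with htdef
  have ht0 : 0 < t := lt_min hc00 (by positivity)
  have htc0 : t ≤ c0 := min_le_left _ _
  have hts : t ∈ sset R := ⟨ht0, lt_of_le_of_lt (ENNReal.ofReal_le_ofReal htc0) hc0.2⟩
  refine ⟨t, hts, ?_⟩
  have hsum1t : Summable fun n : ℕ => (n:ℝ) * a n * t ^ n := summable_one hpos hconv ht0.le hts.2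
  have hsum1c : Summable fun n : ℕ => (n:ℝ) * a n * c0 ^ n :=
    summable_one hpos hconv hc00.le hc0.2
  have hterm : ∀ n : ℕ, (n:ℝ) * a n * t ^ n ≤ t / c0 * ((n:ℝ) * a n * c0 ^ n) := by
    intro n
    rcases n with _ | n
    · simp
    · have hpow : t ^ n ≤ c0 ^ n := pow_le_pow_left₀ ht0.le htc0 n
      have hkey : t ^ (n+1) ≤ t / c0 * c0 ^ (n+1) := by
        rw [show t / c0 * c0 ^ (n+1) = t * c0 ^ n by
          field_simp; ring]
        calc t ^ (n+1) = t * t ^ n := by ring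
          _ ≤ t * c0 ^ n := by nlinarith
      have hcoef : (0:ℝ) ≤ ((n+1 : ℕ):ℝ) * a (n+1) := mul_nonneg (by positivity) (hpos _)
      calc ((n+1 : ℕ):ℝ) * a (n+1) * t ^ (n+1)
          = (((n+1 : ℕ):ℝ) * a (n+1)) * t ^ (n+1) := by ring
        _ ≤ (((n+1 : ℕ):ℝ) * a (n+1)) * (t / c0 * c0 ^ (n+1)) :=
            mul_le_mul_of_nonneg_left hkey hcoef
        _ = t / c0 * (((n+1 : ℕ):ℝ) * a (n+1) * c0 ^ (n+1)) := by ring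
  have hS1le : (∑' n : ℕ, (n:ℝ) * a n * t ^ n)
      ≤ t / c0 * ∑' n : ℕ, (n:ℝ) * a n * c0 ^ n := by
    rw [← tsum_mul_left]
    exact Summable.tsum_le_tsum hterm hsum1t (hsum1c.mul_left _)
  have hpge : a 0 ≤ ∑' n : ℕ, a n * t ^ n := by
    have := Summable.le_tsum (hconv t ht0.le hts.2) 0 fun m _ => mul_nonneg (hpos m) (by positivity)
    simpa using this
  have hnum_nn : 0 ≤ t / c0 * ∑' n : ℕ, (n:ℝ) * a n * c0 ^ n := by positivity
  have hmean : meanK a t ≤ (t / c0 * ∑' n : ℕ, (n:ℝ) * a n * c0 ^ n) / a 0 :=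
    div_le_div₀ hnum_nn hS1le ha0 hpge
  have heq : (t / c0 * ∑' n : ℕ, (n:ℝ) * a n * c0 ^ n) / a 0 = t * K := by
    rw [hKdef]
    field_simp
  have ht2 : t ≤ 1 / (2 * (K + 1)) := min_le_right _ _
  have hfin : t * K < 1 := by
    have h1 : t * K ≤ 1 / (2 * (K + 1)) * K := mul_le_mul_of_nonneg_right ht2 hKnn
    have h2 : 1 / (2 * (K + 1)) * K < 1 := by
      rw [div_mul_eq_mul_div, div_lt_one (by positivity)]
      linarith
    linarith
  calc meanK a t ≤ _ := hmean
    _ = t * K := heq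
    _ < 1 := hfin

lemma part2 (hpos : ∀ n, 0 ≤ a n) (ha0 : 0 < a 0) (ha1 : ∃ n, 1 ≤ n ∧ 0 < a n)
    (hconv : ∀ t : ℝ, 0 ≤ t → ENNReal.ofReal t < R → Summable fun n => a n * t ^ n)
    (hR : 0 < R)
    (hsd : Tendsto (sdK a) (nhdsUpto R) atTop)
    (hI : Tendsto (fun t => ∫ θ in (-(Real.pi * sdK a t))..(Real.pi * sdK a t),
        ‖charN a t θ - ((Real.exp (-θ ^ 2 / 2) : ℝ) : ℂ)‖) (nhdsUpto R) (𝓝 0))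
    (n : ℕ) (hn : 1 ≤ n) :
    ∃! t : ℝ, (0 < t ∧ ENNReal.ofReal t < R) ∧ meanK a t = (n : ℝ) := by
  obtain ⟨c1, hc1s, hc1⟩ := exists_small hpos ha0 hconv hR
  obtain ⟨c2, hc2s, hc2⟩ := meanK_unbounded hpos ha0 hconv hR hsd hI (n : ℝ)
  have hmono := strictMonoOn_meanK hpos ha0 ha1 hconv
  have hn1 : (1:ℝ) ≤ (n:ℝ) := by exact_mod_cast hn
  have hc1c2 : c1 < c2 := by
    by_contra hle
    push_neg at hle
    rcases eq_or_lt_of_le hle with he | hlt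
    · rw [he] at hc2; linarith
    · have := hmono hc2s hc1s hlt; linarith
  have hsub : Set.Icc c1 c2 ⊆ sset R := fun x hx =>
    ⟨lt_of_lt_of_le hc1s.1 hx.1, lt_of_le_of_lt (ENNReal.ofReal_le_ofReal hx.2) hc2s.2⟩
  have hcont : ContinuousOn (meanK a) (Set.Icc c1 c2) := fun x hx =>
    ((hasDerivAt_meanK hpos ha0 hconv (hsub hx).1 (hsub hx).2).continuousAt).continuousWithinAt
  have hmem : (n:ℝ) ∈ Set.Icc (meanK a c1) (meanK a c2) := ⟨by linarith, le_of_lt hc2⟩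
  obtain ⟨t, htIcc, htval⟩ := intermediate_value_Icc hc1c2.le hcont hmem
  have hts : t ∈ sset R := hsub htIcc
  refine ⟨t, ⟨⟨hts.1, hts.2⟩, htval⟩, ?_⟩
  rintro y ⟨⟨hy1, hy2⟩, hyval⟩
  exact hmono.injOn ⟨hy1, hy2⟩ hts (by rw [hyval, htval])

lemma dist_bound (hpos : ∀ n, 0 ≤ a n) (ha0 : 0 < a 0)
    (hconv : ∀ t : ℝ, 0 ≤ t → ENNReal.ofReal t < R → Summable fun n => a n * t ^ n)
    (ht : 0 < t) (h : ENNReal.ofReal t < R) (hσ : 0 < sdK a t)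
    (n : ℕ) (hm : meanK a t = (n : ℝ)) :
    |a n * Real.sqrt (2 * Real.pi) * sdK a t * t ^ n / psum a t
      - (∫ u in (-(Real.pi * sdK a t))..(Real.pi * sdK a t), Real.exp (-u ^ 2 / 2))
        / Real.sqrt (2 * Real.pi)|
      ≤ (∫ θ in (-(Real.pi * sdK a t))..(Real.pi * sdK a t),
          ‖charN a t θ - ((Real.exp (-θ ^ 2 / 2) : ℝ) : ℂ)‖) / Real.sqrt (2 * Real.pi) := by
  set σ := sdK a t with hσdef
  have hsq : Real.sqrt (2 * Real.pi) * Real.sqrt (2 * Real.pi) = 2 * Real.pi :=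
    Real.mul_self_sqrt (by positivity)
  have h2π : 0 < Real.sqrt (2 * Real.pi) := Real.sqrt_pos.2 (by positivity)
  have hc2πne : ((Real.sqrt (2 * Real.pi) : ℝ) : ℂ) ≠ 0 := by
    exact_mod_cast h2π.ne'
  have hpp := psum_pos hpos ha0 hconv ht.le h
  have hple : -(Real.pi * σ) ≤ Real.pi * σ := by nlinarith [Real.pi_pos]
  have hKI := key_integral hpos ha0 hconv ht h hσ n
  have hphase : ∀ u : ℝ, u ∈ Set.uIcc (-(Real.pi * σ)) (Real.pi * σ) →
      charN a t u * Complex.exp (Complex.I * (((meanK a t - n) * u / σ : ℝ) : ℂ))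
        = charN a t u := by
    intro u _
    rw [hm, sub_self]
    norm_num
  rw [intervalIntegral.integral_congr hphase] at hKI
  set X : ℂ := ∫ u in (-(Real.pi * σ))..(Real.pi * σ), charN a t u with hX
  set Y : ℂ := ∫ u in (-(Real.pi * σ))..(Real.pi * σ), ((Real.exp (-u ^ 2 / 2) : ℝ) : ℂ)
    with hY
  set Ar : ℝ := a n * Real.sqrt (2 * Real.pi) * σ * t ^ n / psum a t with hAr
  set Gr : ℝ := (∫ u in (-(Real.pi * σ))..(Real.pi * σ), Real.exp (-u ^ 2 / 2))
    / Real.sqrt (2 * Real.pi) with hGr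
  have hreal : Ar * Real.sqrt (2 * Real.pi) = 2 * Real.pi * σ * (a n * t ^ n) / psum a t := by
    rw [hAr]
    rw [show a n * Real.sqrt (2 * Real.pi) * σ * t ^ n / psum a t * Real.sqrt (2 * Real.pi)
      = Real.sqrt (2 * Real.pi) * Real.sqrt (2 * Real.pi) * (a n * σ * t ^ n) / psum a t
      by ring]
    rw [hsq]
    ring
  have hAc : ((Ar : ℝ) : ℂ) * ((Real.sqrt (2 * Real.pi) : ℝ) : ℂ) = X := by
    rw [← Complex.ofReal_mul, hreal, hKI]
    push_cast
    ring
  have hArc : ((Ar : ℝ) : ℂ) = X / ((Real.sqrt (2 * Real.pi) : ℝ) : ℂ) := by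
    rw [eq_div_iff hc2πne]
    exact hAc
  have hGY : Y = (((∫ u in (-(Real.pi * σ))..(Real.pi * σ), Real.exp (-u ^ 2 / 2)) : ℝ) : ℂ) :=
    intervalIntegral.integral_ofReal
  have hGrc : ((Gr : ℝ) : ℂ) = Y / ((Real.sqrt (2 * Real.pi) : ℝ) : ℂ) := by
    rw [hGr, Complex.ofReal_div, hGY]
  have habs : |Ar - Gr| = ‖X - Y‖ / Real.sqrt (2 * Real.pi) := by
    rw [← Real.norm_eq_abs, ← Complex.norm_real]
    rw [Complex.ofReal_sub, hArc, hGrc, div_sub_div_same, norm_div]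
    congr 1
    rw [Complex.norm_real, Real.norm_eq_abs, abs_of_nonneg h2π.le]
  rw [habs]
  refine (div_le_div_iff_of_pos_right h2π).2 ?_
  have hcontc := charN_continuous (hconv t ht.le h) hpos ht.le
  have hcontg : Continuous fun u : ℝ => ((Real.exp (-u ^ 2 / 2) : ℝ) : ℂ) :=
    Complex.continuous_ofReal.comp (Real.continuous_exp.comp (by continuity))
  have hsub : X - Y = ∫ u in (-(Real.pi * σ))..(Real.pi * σ),
      (charN a t u - ((Real.exp (-u ^ 2 / 2) : ℝ) : ℂ)) :=
    (intervalIntegral.integral_sub (hcontc.intervalIntegrable _ _)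
      (hcontg.intervalIntegrable _ _)).symm
  rw [hsub]
  exact intervalIntegral.norm_integral_le_integral_norm hple

lemma tendsto_ts (hpos : ∀ n, 0 ≤ a n) (ha0 : 0 < a 0) (ha1 : ∃ n, 1 ≤ n ∧ 0 < a n)
    (hconv : ∀ t : ℝ, 0 ≤ t → ENNReal.ofReal t < R → Summable fun n => a n * t ^ n)
    (hR : 0 < R) (ts : ℕ → ℝ)
    (hts : ∀ n : ℕ, 1 ≤ n → (0 < ts n ∧ ENNReal.ofReal (ts n) < R) ∧ meanK a (ts n) = (n : ℝ)) :
    Tendsto ts atTop (nhdsUpto R) := by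
  have hmono := strictMonoOn_meanK hpos ha0 ha1 hconv
  have key : ∀ c, c ∈ sset R → ∀ᶠ n : ℕ in atTop, c < ts n := by
    intro c hc
    obtain ⟨Nc, hNc⟩ := exists_nat_gt (meanK a c)
    filter_upwards [eventually_ge_atTop (max 1 Nc)] with n hn
    have hn1 : 1 ≤ n := le_trans (le_max_left _ _) hn
    have hnN : Nc ≤ n := le_trans (le_max_right _ _) hn
    obtain ⟨hmem, hval⟩ := hts n hn1
    by_contra hle
    push_neg at hle
    have hle2 : meanK a (ts n) ≤ meanK a c := by
      rcases eq_or_lt_of_le hle with he | hlt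
      · rw [he]
      · exact (hmono ⟨hmem.1, hmem.2⟩ hc hlt).le
    rw [hval] at hle2
    have hcast : (Nc : ℝ) ≤ (n : ℝ) := by exact_mod_cast hnN
    linarith
  unfold nhdsUpto
  split_ifs with h
  · rw [tendsto_atTop]
    intro b
    have hc : max b 1 ∈ sset R :=
      ⟨lt_of_lt_of_le one_pos (le_max_right _ _), by simp [h]⟩
    filter_upwards [key _ hc] with n hn
    exact le_trans (le_max_left _ _) hn.le
  · have hrr : 0 < R.toReal := ENNReal.toReal_pos hR.ne' h
    rw [tendsto_nhdsWithin_iff]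
    constructor
    · rw [tendsto_order]
      constructor
      · intro b hb
        set c := (max b 0 + R.toReal) / 2 with hcdef
        have hmax : max b 0 < R.toReal := max_lt hb hrr
        have hc0 : 0 < c := by
          have := le_max_right b 0
          rw [hcdef]
          linarith
        have hcb : b < c := by
          have := le_max_left b 0
          rw [hcdef]
          linarith
        have hcr : c < R.toReal := by rw [hcdef]; linarith
        have hc : c ∈ sset R := ⟨hc0, (ENNReal.ofReal_lt_iff_lt_toReal hc0.le h).2 hcr⟩
        filter_upwards [key c hc] with n hn
        exact lt_trans hcb hn
      · intro b hb
        filter_upwards [eventually_ge_atTop 1] with n hn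
        have hmem := (hts n hn).1
        exact lt_trans (ofReal_lt_toReal hmem.1.le h hmem.2) hb
    · filter_upwards [eventually_ge_atTop 1] with n hn
      exact ofReal_lt_toReal (hts n hn).1.1.le h (hts n hn).1.2

end St13

/-- Hayman's asymptotic formula, Corollary 3.2.5 and Corollary 3.2.4.
If `f ∈ K` with radius of convergence `R > 0` is strongly Gaussian, then
`M_f = lim_{t↑R} m_f(t) = +∞`, for each `n ≥ 1` there is a unique `t_n ∈ (0,R)` with
`m_f(t_n) = n`, and `a_n ~ f(t_n)/(√(2π)·σ_f(t_n)·t_nⁿ)` as `n → ∞`. -/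
theorem statement13 (a : ℕ → ℝ) (R : ℝ≥0∞) (hR : 0 < R)
    (hpos : ∀ n, 0 ≤ a n) (ha0 : 0 < a 0) (ha1 : ∃ n, 1 ≤ n ∧ 0 < a n)
    (hconv : ∀ t : ℝ, 0 ≤ t → ENNReal.ofReal t < R → Summable fun n => a n * t ^ n)
    (hdiv : ∀ t : ℝ, R < ENNReal.ofReal t → ¬ Summable fun n => a n * t ^ n)
    (hSG : StronglyGaussian a R) :
    Tendsto (meanK a) (nhdsUpto R) atTop ∧
    (∀ n : ℕ, 1 ≤ n →
      ∃! t : ℝ, (0 < t ∧ ENNReal.ofReal t < R) ∧ meanK a t = (n : ℝ)) ∧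
    (∀ ts : ℕ → ℝ,
      (∀ n : ℕ, 1 ≤ n → (0 < ts n ∧ ENNReal.ofReal (ts n) < R) ∧ meanK a (ts n) = (n : ℝ)) →
      Tendsto
        (fun n : ℕ =>
          a n * Real.sqrt (2 * Real.pi) * sdK a (ts n) * ts n ^ n / psum a (ts n))
        atTop (𝓝 1)) := by
  obtain ⟨hsd, hI⟩ := hSG
  refine ⟨St13.meanK_tendsto hpos ha0 ha1 hconv hR hsd hI,
    fun n hn => St13.part2 hpos ha0 ha1 hconv hR hsd hI n hn, ?_⟩
  intro ts hts
  have htts := St13.tendsto_ts hpos ha0 ha1 hconv hR ts hts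
  have hσt : Tendsto (fun n => sdK a (ts n)) atTop atTop := hsd.comp htts
  have hIt : Tendsto (fun n => ∫ θ in (-(Real.pi * sdK a (ts n)))..(Real.pi * sdK a (ts n)),
      ‖charN a (ts n) θ - ((Real.exp (-θ ^ 2 / 2) : ℝ) : ℂ)‖) atTop (𝓝 0) := hI.comp htts
  have h2π : 0 < Real.sqrt (2 * Real.pi) := Real.sqrt_pos.2 (by positivity)
  set G : ℕ → ℝ := fun n =>
    (∫ u in (-(Real.pi * sdK a (ts n)))..(Real.pi * sdK a (ts n)), Real.exp (-u ^ 2 / 2))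
      / Real.sqrt (2 * Real.pi) with hGdef
  have hG : Tendsto G atTop (𝓝 1) := by
    have hb : Tendsto (fun n : ℕ => Real.pi * sdK a (ts n)) atTop atTop :=
      hσt.const_mul_atTop Real.pi_pos
    have ha' : Tendsto (fun n : ℕ => -(Real.pi * sdK a (ts n))) atTop atBot :=
      tendsto_neg_atTop_atBot.comp hb
    have h1 := MeasureTheory.intervalIntegral_tendsto_integral St13.gauss_integrable ha' hb
    rw [St13.gauss_total] at h1
    have h2 := h1.div_const (Real.sqrt (2 * Real.pi))
    rwa [div_self h2π.ne'] at h2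
  set A : ℕ → ℝ := fun n =>
    a n * Real.sqrt (2 * Real.pi) * sdK a (ts n) * ts n ^ n / psum a (ts n) with hAdef
  have hdiff : Tendsto (fun n => A n - G n) atTop (𝓝 0) := by
    have hlim0 : Tendsto (fun n => (∫ θ in (-(Real.pi * sdK a (ts n)))..(Real.pi * sdK a (ts n)),
        ‖charN a (ts n) θ - ((Real.exp (-θ ^ 2 / 2) : ℝ) : ℂ)‖) / Real.sqrt (2 * Real.pi))
        atTop (𝓝 0) := by
      have h0 := hIt.div_const (Real.sqrt (2 * Real.pi))
      rwa [zero_div] at h0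
    refine squeeze_zero_norm' ?_ hlim0
    filter_upwards [eventually_ge_atTop 1] with n hn
    obtain ⟨hmem, hval⟩ := hts n hn
    have hσpos := St13.sdK_pos hpos ha0 ha1 hconv hmem.1 hmem.2
    have hdb := St13.dist_bound hpos ha0 hconv hmem.1 hmem.2 hσpos n hval
    rw [Real.norm_eq_abs]
    exact hdb
  have hA : Tendsto A atTop (𝓝 1) := by
    have h3 := hdiff.add hG
    rw [zero_add] at h3
    exact h3.congr fun n => by ring
  exact hA
end
end

section
/- (Báez-Duarte asymptotic formula) Let f(z) = ∑_{n≥0} a_n z^n be a strongly Gaussian power series in the class K with radius of convergence R > 0. Suppose m̃ : (0,R) → ℝ and σ̃ : (0,R) → ℝ are functions such that: m̃ is continuous and increasing with lim_{t↑R} m̃(t) = +∞; σ̃(t) ~ σ_f(t) as t↑R; and lim_{t↑R} (m̃(t) − m_f(t))/σ_f(t) = 0. Then for any sequence (τ_n) in (0,R) with m̃(τ_n) = n for each n, one has a_n ~ f(τ_n)/(√(2π) · σ̃(τ_n) · τ_n^n) as n → ∞. -/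
open Filter Topology MeasureTheory
open scoped ENNReal NNReal Classical

noncomputable section

set_option maxHeartbeats 1600000

lemma norm_exp_mul_I_sub_one_le (r : ℝ) : ‖Complex.exp ((r:ℂ) * Complex.I) - 1‖ ≤ |r| := by
  have h1 : Complex.exp ((r:ℂ) * Complex.I) - 1
      = Complex.ofReal (Real.cos r - 1) + Complex.ofReal (Real.sin r) * Complex.I := by
    rw [Complex.exp_mul_I]; push_cast; ring
  rw [h1, Complex.norm_add_mul_I]
  have hc := Real.one_sub_sq_div_two_le_cos (x := r)
  have hs := Real.sin_sq_add_cos_sq r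
  have h2 : (Real.cos r - 1)^2 + (Real.sin r)^2 ≤ r^2 := by nlinarith
  calc Real.sqrt ((Real.cos r - 1)^2 + (Real.sin r)^2) ≤ Real.sqrt (r^2) :=
        Real.sqrt_le_sqrt h2
    _ = |r| := Real.sqrt_sq_eq_abs r

lemma Fc_ofReal (a : ℕ → ℝ) (t : ℝ) : Fc a (t:ℂ) = ((psum a t : ℝ) : ℂ) := by
  rw [Fc, psum, Complex.ofReal_tsum]
  exact tsum_congr fun n => by push_cast; ring

lemma integral_exp_int_mul (m : ℤ) :
    ∫ θ : ℝ in (-Real.pi)..Real.pi, Complex.exp ((((m:ℝ) * θ : ℝ):ℂ) * Complex.I)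
      = if m = 0 then ((2*Real.pi : ℝ):ℂ) else 0 := by
  by_cases hm : m = 0
  · simp [hm, intervalIntegral.integral_const]
    push_cast; ring
  · simp only [hm, if_false]
    have hrw : ∀ θ:ℝ, (((m:ℝ) * θ : ℝ):ℂ) * Complex.I = ((m:ℂ) * Complex.I) * (θ:ℂ) := by
      intro θ; push_cast; ring
    simp only [hrw]
    rw [integral_exp_mul_complex (by simp [hm, Complex.ext_iff] : ((m:ℂ) * Complex.I) ≠ 0)]
    have : Complex.exp ((m:ℂ)*Complex.I*(Real.pi:ℂ)) = Complex.exp ((m:ℂ)*Complex.I*((-Real.pi:ℝ):ℂ)) := by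
      rw [show ((m:ℂ)*Complex.I*(Real.pi:ℂ)) = (m:ℂ)*Complex.I*((-Real.pi:ℝ):ℂ) + m*(2*Real.pi*Complex.I) by push_cast; ring,
        Complex.exp_add, Complex.exp_int_mul_two_pi_mul_I, mul_one]
    rw [this]; simp

lemma fourier_coeff (a : ℕ → ℝ) (hpos : ∀ k, 0 ≤ a k) {t : ℝ} (ht : 0 < t)
    (hs : Summable fun k => a k * t ^ k) (n : ℕ) :
    ∫ θ in (-Real.pi)..Real.pi,
        Fc a ((t:ℂ) * Complex.exp (Complex.I * (θ:ℂ))) * Complex.exp (-Complex.I * (((n:ℝ) * θ : ℝ):ℂ))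
      = ((2 * Real.pi * (a n * t ^ n) : ℝ) : ℂ) := by
  set F : ℕ → ℝ → ℂ := fun k θ =>
    ((a k * t ^ k : ℝ):ℂ) * Complex.exp ((((k:ℝ) - (n:ℝ)) * θ : ℝ) * Complex.I) with hF
  have hFc : ∀ θ:ℝ, Fc a ((t:ℂ)*Complex.exp (Complex.I*(θ:ℂ)))
      * Complex.exp (-Complex.I * (((n:ℝ)*θ:ℝ):ℂ)) = ∑' k, F k θ := by
    intro θ
    rw [Fc, ← tsum_mul_right]
    refine tsum_congr fun k => ?_
    have he : Complex.exp (Complex.I*(θ:ℂ)) ^ k * Complex.exp (-Complex.I * (((n:ℝ)*θ:ℝ):ℂ))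
        = Complex.exp ((((k:ℝ) - (n:ℝ)) * θ : ℝ) * Complex.I) := by
      rw [← Complex.exp_nat_mul, ← Complex.exp_add]
      congr 1; push_cast; ring
    have hsplit : ((a k:ℝ):ℂ) * ((t:ℂ) * Complex.exp (Complex.I*(θ:ℂ)))^k
        * Complex.exp (-Complex.I * (((n:ℝ)*θ:ℝ):ℂ))
        = ((a k * t^k:ℝ):ℂ) * (Complex.exp (Complex.I*(θ:ℂ))^k
            * Complex.exp (-Complex.I * (((n:ℝ)*θ:ℝ):ℂ))) := by
      push_cast; ring
    rw [hsplit, he, hF]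
  have hle : -Real.pi ≤ Real.pi := by linarith [Real.pi_pos]
  have hnorm : ∀ k (θ:ℝ), ‖F k θ‖ = a k * t ^ k := by
    intro k θ
    rw [hF]
    simp only [norm_mul, Complex.norm_real, Real.norm_eq_abs, Complex.norm_exp_ofReal_mul_I,
      mul_one]
    rw [← abs_mul]
    exact abs_of_nonneg (mul_nonneg (hpos k) (pow_nonneg ht.le k))
  have hmeas : ∀ k, AEStronglyMeasurable (F k) (volume.restrict (Set.Ioc (-Real.pi) Real.pi)) := by
    intro k
    refine Continuous.aestronglyMeasurable ?_
    rw [hF]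
    fun_prop
  have hfin : (∑' k, ∫⁻ θ in Set.Ioc (-Real.pi) Real.pi, ‖F k θ‖₊) ≠ ⊤ := by
    have hlint : ∀ k, (∫⁻ θ in Set.Ioc (-Real.pi) Real.pi, ‖F k θ‖₊)
        = ENNReal.ofReal (a k * t ^ k) * ENNReal.ofReal (2*Real.pi) := by
      intro k
      have : ∀ θ:ℝ, (‖F k θ‖₊ : ℝ≥0∞) = ENNReal.ofReal (a k * t ^ k) := by
        intro θ; rw [← hnorm k θ]; exact (ofReal_norm _).symm
      rw [lintegral_congr this, lintegral_const, Measure.restrict_apply_univ, Real.volume_Ioc]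
      congr 1; ring
    simp only [hlint]
    rw [ENNReal.tsum_mul_right]
    refine ENNReal.mul_ne_top ?_ ENNReal.ofReal_ne_top
    rw [← ENNReal.ofReal_tsum_of_nonneg (fun k => mul_nonneg (hpos k) (pow_nonneg ht.le k)) hs]
    exact ENNReal.ofReal_ne_top
  have hint : ∀ k, ∫ θ in Set.Ioc (-Real.pi) Real.pi, F k θ
      = ((a k * t ^ k : ℝ):ℂ) * (if ((k:ℤ) - (n:ℤ)) = 0 then ((2*Real.pi : ℝ):ℂ) else 0) := by
    intro k
    rw [← intervalIntegral.integral_of_le hle, hF]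
    simp only
    rw [intervalIntegral.integral_const_mul]
    congr 1
    have := integral_exp_int_mul ((k:ℤ) - (n:ℤ))
    rw [← this]
    refine intervalIntegral.integral_congr fun θ _ => ?_
    congr 2
    push_cast; ring
  calc ∫ θ in (-Real.pi)..Real.pi,
        Fc a ((t:ℂ) * Complex.exp (Complex.I * (θ:ℂ))) * Complex.exp (-Complex.I * (((n:ℝ)*θ:ℝ):ℂ))
      = ∫ θ in (-Real.pi)..Real.pi, ∑' k, F k θ :=
        intervalIntegral.integral_congr fun θ _ => hFc θ
    _ = ∫ θ in Set.Ioc (-Real.pi) Real.pi, ∑' k, F k θ := intervalIntegral.integral_of_le hle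
    _ = ∑' k, ∫ θ in Set.Ioc (-Real.pi) Real.pi, F k θ := integral_tsum hmeas hfin
    _ = ((2 * Real.pi * (a n * t ^ n) : ℝ) : ℂ) := by
        rw [tsum_eq_single n]
        · rw [hint n]; simp; push_cast; ring
        · intro k hk
          rw [hint k]
          have hne : ((k:ℤ) - (n:ℤ)) ≠ 0 := by
            simpa using sub_ne_zero.mpr (fun h => hk (by exact_mod_cast h))
          simp [hne]

lemma change_var (a : ℕ → ℝ) (hpos : ∀ k, 0 ≤ a k) {t : ℝ} (ht : 0 < t)
    (hs : Summable fun k => a k * t ^ k) (n : ℕ) (hσ : sdK a t ≠ 0) :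
    ∫ x in (-(Real.pi * sdK a t))..(Real.pi * sdK a t),
        charN a t x * Complex.exp (-Complex.I * (((((n:ℝ) - meanK a t)/sdK a t) * x : ℝ):ℂ))
      = ((sdK a t : ℝ) : ℂ) * (((2 * Real.pi * (a n * t ^ n) : ℝ):ℂ) / Fc a (t:ℂ)) := by
  set σ := sdK a t with hσdef
  set m := meanK a t with hmdef
  set δ := ((n:ℝ) - m)/σ with hδdef
  set H : ℝ → ℂ := fun x => charN a t x * Complex.exp (-Complex.I * ((δ * x : ℝ):ℂ)) with hH
  have hcomp : ∀ θ : ℝ, H (θ * σ)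
      = Fc a ((t:ℂ) * Complex.exp (Complex.I * (θ:ℂ))) * Complex.exp (-Complex.I * (((n:ℝ) * θ : ℝ):ℂ))
        / Fc a (t:ℂ) := by
    intro θ
    rw [hH]
    simp only [charN, ← hσdef, ← hmdef]
    rw [mul_div_cancel_right₀ θ hσ]
    have h1 : Complex.exp (-Complex.I * ((θ * σ * m / σ : ℝ):ℂ))
        * Complex.exp (-Complex.I * ((δ * (θ * σ) : ℝ):ℂ))
        = Complex.exp (-Complex.I * (((n:ℝ) * θ : ℝ):ℂ)) := by
      rw [← Complex.exp_add]
      congr 1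
      have e1 : θ * σ * m / σ = θ * m := by rw [mul_right_comm]; exact mul_div_cancel_right₀ _ hσ
      have e2 : δ * (θ * σ) = ((n:ℝ) - m) * θ := by rw [hδdef]; field_simp
      rw [e1, e2]
      push_cast
      ring
    calc Fc a ((t:ℂ) * Complex.exp (Complex.I * (θ:ℂ))) / Fc a (t:ℂ)
          * Complex.exp (-Complex.I * ((θ * σ * m / σ : ℝ):ℂ))
          * Complex.exp (-Complex.I * ((δ * (θ * σ) : ℝ):ℂ))
        = Fc a ((t:ℂ) * Complex.exp (Complex.I * (θ:ℂ)))
          * (Complex.exp (-Complex.I * ((θ * σ * m / σ : ℝ):ℂ))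
             * Complex.exp (-Complex.I * ((δ * (θ * σ) : ℝ):ℂ))) / Fc a (t:ℂ) := by ring
      _ = _ := by rw [h1]
  have hcv := intervalIntegral.integral_comp_mul_right H hσ (a := -Real.pi) (b := Real.pi)
  have hval : ∫ θ in (-Real.pi)..Real.pi, H (θ * σ)
      = ((2 * Real.pi * (a n * t ^ n) : ℝ):ℂ) / Fc a (t:ℂ) := by
    rw [intervalIntegral.integral_congr (g := fun θ =>
        Fc a ((t:ℂ) * Complex.exp (Complex.I * (θ:ℂ)))
          * Complex.exp (-Complex.I * (((n:ℝ) * θ : ℝ):ℂ)) / Fc a (t:ℂ))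
        (fun θ _ => hcomp θ)]
    rw [intervalIntegral.integral_div, fourier_coeff a hpos ht hs n]
  rw [hval] at hcv
  have h2 : (σ:ℝ) • (((2 * Real.pi * (a n * t ^ n) : ℝ):ℂ) / Fc a (t:ℂ))
      = ∫ x in (-Real.pi*σ)..(Real.pi*σ), H x := by
    rw [hcv, smul_inv_smul₀ hσ]
  rw [show -(Real.pi * σ) = -Real.pi * σ by ring, ← h2, Complex.real_smul]

lemma continuous_Fc_circle (a : ℕ → ℝ) (hpos : ∀ k, 0 ≤ a k) {t : ℝ} (ht : 0 ≤ t)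
    (hs : Summable fun k => a k * t ^ k) {g : ℝ → ℝ} (hg : Continuous g) :
    Continuous fun x : ℝ => Fc a ((t:ℂ) * Complex.exp (Complex.I * ((g x : ℝ):ℂ))) := by
  refine continuous_tsum (f := fun k (x:ℝ) => (a k : ℂ) * ((t:ℂ) * Complex.exp (Complex.I * ((g x : ℝ):ℂ)))^k)
    (fun k => by fun_prop) hs (fun k x => ?_)
  have hnorm : ‖(t:ℂ) * Complex.exp (Complex.I * ((g x : ℝ):ℂ))‖ = t := by
    rw [norm_mul, Complex.norm_real, Complex.norm_exp]
    simp [abs_of_nonneg ht]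
  rw [norm_mul, norm_pow, hnorm, Complex.norm_real, Real.norm_eq_abs,
    abs_of_nonneg (hpos k)]

lemma continuous_charN (a : ℕ → ℝ) (hpos : ∀ k, 0 ≤ a k) {t : ℝ} (ht : 0 ≤ t)
    (hs : Summable fun k => a k * t ^ k) : Continuous (charN a t) := by
  unfold charN
  refine Continuous.mul (Continuous.div_const ?_ _) ?_
  · exact continuous_Fc_circle a hpos ht hs (continuous_id.div_const _)
  · fun_prop

lemma integrable_abs_gauss : Integrable (fun x : ℝ => |x| * Real.exp (-x^2/2)) := by
  have h := (integrable_mul_exp_neg_mul_sq (b:=1/2) one_half_pos).abs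
  refine h.congr (Eventually.of_forall fun x => ?_)
  show |x * Real.exp (-(1/2) * x^2)| = |x| * Real.exp (-x^2/2)
  rw [abs_mul, abs_of_pos (Real.exp_pos _)]
  congr 1
  ring

lemma key_est (a : ℕ → ℝ) (hpos : ∀ k, 0 ≤ a k) {t : ℝ} (ht : 0 < t)
    (hs : Summable fun k => a k * t ^ k) (hσ : 0 < sdK a t) (δ : ℝ) :
    ‖(∫ x in (-(Real.pi * sdK a t))..(Real.pi * sdK a t),
        charN a t x * Complex.exp (-Complex.I * ((δ * x : ℝ):ℂ)))
      - (((∫ x in (-(Real.pi * sdK a t))..(Real.pi * sdK a t), Real.exp (-x^2/2)) : ℝ):ℂ)‖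
    ≤ (∫ x in (-(Real.pi * sdK a t))..(Real.pi * sdK a t),
        ‖charN a t x - ((Real.exp (-x^2/2) : ℝ):ℂ)‖)
      + |δ| * ∫ x : ℝ, |x| * Real.exp (-x^2/2) := by
  set L := Real.pi * sdK a t with hLdef
  have hL0 : 0 ≤ L := mul_nonneg Real.pi_pos.le hσ.le
  have hle : -L ≤ L := by linarith
  set g : ℝ → ℂ := fun x => ((Real.exp (-x^2/2) : ℝ):ℂ) with hg
  set e : ℝ → ℂ := fun x => Complex.exp (-Complex.I * ((δ * x : ℝ):ℂ)) with he
  have hconte : Continuous e := by rw [he]; fun_prop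
  have hcontg : Continuous g := by rw [hg]; fun_prop
  have hcontc : Continuous (charN a t) := continuous_charN a hpos ht.le hs
  have hofreal : (((∫ x in (-L)..L, Real.exp (-x^2/2)) : ℝ):ℂ) = ∫ x in (-L)..L, g x := by
    rw [hg, intervalIntegral.integral_ofReal]
  rw [hofreal]
  have hi1 : IntervalIntegrable (fun x => charN a t x * e x) volume (-L) L :=
    (hcontc.mul hconte).intervalIntegrable _ _
  have hi2 : IntervalIntegrable g volume (-L) L := hcontg.intervalIntegrable _ _
  have hsplit : (∫ x in (-L)..L, charN a t x * e x) - ∫ x in (-L)..L, g x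
      = (∫ x in (-L)..L, (charN a t x - g x) * e x) + ∫ x in (-L)..L, g x * (e x - 1) := by
    rw [← intervalIntegral.integral_add (f := fun x => (charN a t x - g x) * e x)
        (g := fun x => g x * (e x - 1))
        (((hcontc.sub hcontg).mul hconte).intervalIntegrable _ _)
        ((hcontg.mul (hconte.sub continuous_const)).intervalIntegrable _ _),
      ← intervalIntegral.integral_sub hi1 hi2]
    refine intervalIntegral.integral_congr fun x _ => ?_
    ring
  rw [hsplit]
  refine (norm_add_le _ _).trans (add_le_add ?_ ?_)
  · refine (intervalIntegral.norm_integral_le_integral_norm hle).trans ?_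
    refine le_of_eq (intervalIntegral.integral_congr fun x _ => ?_)
    rw [norm_mul]
    have h1 : ‖e x‖ = 1 := by
      rw [he]
      simp only [Complex.norm_exp]
      norm_num
    rw [h1, mul_one]
  · refine (intervalIntegral.norm_integral_le_integral_norm hle).trans ?_
    have hbound : ∀ x ∈ Set.Icc (-L) L, ‖g x * (e x - 1)‖ ≤ |δ| * (|x| * Real.exp (-x^2/2)) := by
      intro x _
      have h1 : ‖g x‖ = Real.exp (-x^2/2) := by
        show ‖((Real.exp (-x^2/2) : ℝ):ℂ)‖ = _
        rw [Complex.norm_real, Real.norm_eq_abs, abs_of_pos (Real.exp_pos _)]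
      have h2 : ‖e x - 1‖ ≤ |δ * x| := by
        have hex : e x = Complex.exp (((-(δ * x) : ℝ):ℂ) * Complex.I) := by
          rw [he]
          exact congrArg Complex.exp (by push_cast; ring)
        rw [hex]
        simpa [abs_neg] using norm_exp_mul_I_sub_one_le (-(δ * x))
      calc ‖g x * (e x - 1)‖ = Real.exp (-x^2/2) * ‖e x - 1‖ := by rw [norm_mul, h1]
        _ ≤ Real.exp (-x^2/2) * |δ * x| :=
            mul_le_mul_of_nonneg_left h2 (Real.exp_pos _).le
        _ = |δ| * (|x| * Real.exp (-x^2/2)) := by rw [abs_mul]; ring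
    calc (∫ x in (-L)..L, ‖g x * (e x - 1)‖)
        ≤ ∫ x in (-L)..L, |δ| * (|x| * Real.exp (-x^2/2)) :=
          intervalIntegral.integral_mono_on hle
            ((hcontg.mul (hconte.sub continuous_const)).norm.intervalIntegrable _ _)
            ((by fun_prop : Continuous fun x : ℝ =>
              |δ| * (|x| * Real.exp (-x^2/2))).intervalIntegrable _ _) hbound
      _ = |δ| * ∫ x in (-L)..L, |x| * Real.exp (-x^2/2) :=
          intervalIntegral.integral_const_mul _ _
      _ ≤ |δ| * ∫ x : ℝ, |x| * Real.exp (-x^2/2) := by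
          refine mul_le_mul_of_nonneg_left ?_ (abs_nonneg δ)
          rw [intervalIntegral.integral_of_le hle]
          exact setIntegral_le_integral integrable_abs_gauss
            (Eventually.of_forall fun x => by positivity)

lemma psum_pos (a : ℕ → ℝ) (hpos : ∀ k, 0 ≤ a k) (ha0 : 0 < a 0) {t : ℝ} (ht : 0 < t)
    (hs : Summable fun k => a k * t ^ k) : 0 < psum a t := by
  have h0 : 0 < a 0 * t ^ 0 := by simpa using ha0
  exact Summable.tsum_pos hs (fun k => mul_nonneg (hpos k) (pow_nonneg ht.le k)) 0 h0

lemma tau_tendsto (R : ℝ≥0∞) (hR : 0 < R) (mt : ℝ → ℝ)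
    (hmono : StrictMonoOn mt {t : ℝ | 0 < t ∧ ENNReal.ofReal t < R})
    (τ : ℕ → ℝ) (hτ : ∀ n : ℕ, ((0 < τ n ∧ ENNReal.ofReal (τ n) < R)) ∧ mt (τ n) = (n:ℝ)) :
    Tendsto τ atTop (nhdsUpto R) := by
  have key : ∀ t0 ∈ {t : ℝ | 0 < t ∧ ENNReal.ofReal t < R}, ∀ᶠ n : ℕ in atTop, t0 < τ n := by
    intro t0 ht0
    filter_upwards [eventually_gt_atTop ⌈mt t0⌉₊] with n hn
    have hmt : mt t0 < mt (τ n) := by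
      rw [(hτ n).2]
      calc mt t0 ≤ (⌈mt t0⌉₊ : ℝ) := Nat.le_ceil _
        _ < (n : ℝ) := by exact_mod_cast hn
    exact (hmono.lt_iff_lt ht0 (hτ n).1).mp hmt
  rw [nhdsUpto]
  split_ifs with htop
  · refine tendsto_atTop.mpr fun b => ?_
    have hmem : max b 1 ∈ {t : ℝ | 0 < t ∧ ENNReal.ofReal t < R} :=
      ⟨lt_of_lt_of_le one_pos (le_max_right b 1), by simp [htop]⟩
    filter_upwards [key _ hmem] with n hn
    exact le_of_lt (lt_of_le_of_lt (le_max_left b 1) hn)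
  · have hr0 : 0 < R.toReal := ENNReal.toReal_pos hR.ne' htop
    have hlt : ∀ n, τ n < R.toReal := fun n => by
      have h := (hτ n).1.2
      rwa [ENNReal.ofReal_lt_iff_lt_toReal (hτ n).1.1.le htop] at h
    rw [tendsto_nhdsWithin_iff]
    constructor
    · refine tendsto_order.2 ⟨fun b hb => ?_, fun b hb => ?_⟩
      · set t0 := (max b 0 + R.toReal)/2 with ht0def
        have h1 : max b 0 < R.toReal := max_lt hb hr0
        have h2 : 0 < t0 := by
          have := le_max_right b 0; rw [ht0def]; linarith
        have h3 : t0 < R.toReal := by rw [ht0def]; linarith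
        have hmem : t0 ∈ {t : ℝ | 0 < t ∧ ENNReal.ofReal t < R} :=
          ⟨h2, (ENNReal.ofReal_lt_iff_lt_toReal h2.le htop).mpr h3⟩
        filter_upwards [key _ hmem] with n hn
        have := le_max_left b 0
        have : b ≤ max b 0 := le_max_left b 0
        calc b < t0 := by rw [ht0def]; linarith
          _ < τ n := hn
      · exact Eventually.of_forall fun n => (hlt n).trans hb
    · exact Eventually.of_forall fun n => hlt n

lemma gauss_interval_tendsto {σ : ℕ → ℝ} (hσ : Tendsto σ atTop atTop) :
    Tendsto (fun n => ∫ x in (-(Real.pi * σ n))..(Real.pi * σ n), Real.exp (-x^2/2))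
      atTop (𝓝 (Real.sqrt (2*Real.pi))) := by
  have hint : Integrable (fun x : ℝ => Real.exp (-x^2/2)) := by
    refine (integrable_exp_neg_mul_sq (b := (1/2:ℝ)) one_half_pos).congr
      (Eventually.of_forall fun x => congrArg Real.exp (by ring))
  have hval : (∫ x : ℝ, Real.exp (-x^2/2)) = Real.sqrt (2*Real.pi) := by
    have h1 : (fun x : ℝ => Real.exp (-x^2/2)) = fun x : ℝ => Real.exp (-(1/2) * x^2) :=
      funext fun x => congrArg Real.exp (by ring)
    rw [h1, integral_gaussian]
    congr 1
    ring
  rw [← hval]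
  have hmul : Tendsto (fun n => Real.pi * σ n) atTop atTop :=
    (hσ.const_mul_atTop Real.pi_pos)
  exact intervalIntegral_tendsto_integral hint (tendsto_neg_atBot_iff.mpr hmul) hmul

/-- Báez-Duarte asymptotic formula, Theorem 3.2.8. Let `f ∈ K` with
radius of convergence `R > 0` be strongly Gaussian, and let `mt, st : (0,R) → ℝ` with `mt`
continuous and (strictly) increasing tending to `+∞` as `t ↑ R`, `st(t) ~ σ_f(t)`, and
`(mt(t) − m_f(t))/σ_f(t) → 0` as `t ↑ R`. Then for any sequence `(τ n)` in `(0,R)` with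
`mt (τ n) = n` for each `n`, one has `a_n ~ f(τ_n)/(√(2π)·st(τ_n)·τ_nⁿ)` as `n → ∞`. -/
theorem statement14 (a : ℕ → ℝ) (R : ℝ≥0∞) (hR : 0 < R)
    (hpos : ∀ n, 0 ≤ a n) (ha0 : 0 < a 0) (ha1 : ∃ n, 1 ≤ n ∧ 0 < a n)
    (hconv : ∀ t : ℝ, 0 ≤ t → ENNReal.ofReal t < R → Summable fun n => a n * t ^ n)
    (hdiv : ∀ t : ℝ, R < ENNReal.ofReal t → ¬ Summable fun n => a n * t ^ n)
    (hSG : StronglyGaussian a R)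
    (mt st : ℝ → ℝ)
    (hmono : StrictMonoOn mt {t : ℝ | 0 < t ∧ ENNReal.ofReal t < R})
    (hcont : ContinuousOn mt {t : ℝ | 0 < t ∧ ENNReal.ofReal t < R})
    (hmtop : Tendsto mt (nhdsUpto R) atTop)
    (hst : Tendsto (fun t => st t / sdK a t) (nhdsUpto R) (𝓝 1))
    (happrox : Tendsto (fun t => (mt t - meanK a t) / sdK a t) (nhdsUpto R) (𝓝 0)) :
    ∀ τ : ℕ → ℝ,
      (∀ n : ℕ, (0 < τ n ∧ ENNReal.ofReal (τ n) < R) ∧ mt (τ n) = (n : ℝ)) →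
      Tendsto
        (fun n : ℕ =>
          a n * Real.sqrt (2 * Real.pi) * st (τ n) * τ n ^ n / psum a (τ n))
        atTop (𝓝 1) := by
  intro τ hτ
  have hτpos : ∀ n, 0 < τ n := fun n => (hτ n).1.1
  have hsum : ∀ n, Summable fun k => a k * τ n ^ k :=
    fun n => hconv _ (hτpos n).le (hτ n).1.2
  have hpsum : ∀ n, 0 < psum a (τ n) :=
    fun n => psum_pos a hpos ha0 (hτpos n) (hsum n)
  have htend : Tendsto τ atTop (nhdsUpto R) := tau_tendsto R hR mt hmono τ hτ
  have hsig : Tendsto (fun n => sdK a (τ n)) atTop atTop := hSG.1.comp htend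
  have hσpos : ∀ᶠ n in atTop, 0 < sdK a (τ n) := hsig.eventually_gt_atTop 0
  have hSGint : Tendsto (fun n => ∫ θ in (-(Real.pi * sdK a (τ n)))..(Real.pi * sdK a (τ n)),
      ‖charN a (τ n) θ - ((Real.exp (-θ ^ 2 / 2) : ℝ) : ℂ)‖) atTop (𝓝 0) := hSG.2.comp htend
  set δ : ℕ → ℝ := fun n => ((n:ℝ) - meanK a (τ n)) / sdK a (τ n) with hδdef
  have hδ : Tendsto δ atTop (𝓝 0) := by
    have h := happrox.comp htend
    refine h.congr fun n => ?_
    simp only [Function.comp_apply, (hτ n).2, hδdef]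
  have hstq : Tendsto (fun n => st (τ n) / sdK a (τ n)) atTop (𝓝 1) := hst.comp htend
  set G : ℕ → ℝ := fun n =>
    ∫ x in (-(Real.pi * sdK a (τ n)))..(Real.pi * sdK a (τ n)), Real.exp (-x^2/2) with hGdef
  have hG : Tendsto G atTop (𝓝 (Real.sqrt (2*Real.pi))) := gauss_interval_tendsto hsig
  set r : ℕ → ℝ := fun n =>
    2 * Real.pi * (a n * τ n ^ n) * sdK a (τ n) / psum a (τ n) with hrdef
  -- identify the complex integral with r n (eventually)
  set I : ℕ → ℂ := fun n =>
    ∫ x in (-(Real.pi * sdK a (τ n)))..(Real.pi * sdK a (τ n)),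
      charN a (τ n) x * Complex.exp (-Complex.I * ((δ n * x : ℝ):ℂ)) with hIdef
  have hIr : ∀ᶠ n in atTop, I n = ((r n : ℝ) : ℂ) := by
    filter_upwards [hσpos] with n hσn
    have := change_var a hpos (hτpos n) (hsum n) n hσn.ne'
    rw [hIdef]
    simp only
    rw [this, Fc_ofReal]
    rw [hrdef]
    simp only
    rw [Complex.ofReal_div]
    push_cast
    field_simp
  -- the estimate
  have hest : ∀ᶠ n in atTop, |r n - G n| ≤
      (∫ x in (-(Real.pi * sdK a (τ n)))..(Real.pi * sdK a (τ n)),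
        ‖charN a (τ n) x - ((Real.exp (-x^2/2) : ℝ):ℂ)‖)
      + |δ n| * ∫ x : ℝ, |x| * Real.exp (-x^2/2) := by
    filter_upwards [hσpos, hIr] with n hσn hIrn
    have h : ‖I n - ((G n : ℝ):ℂ)‖ ≤
        (∫ x in (-(Real.pi * sdK a (τ n)))..(Real.pi * sdK a (τ n)),
          ‖charN a (τ n) x - ((Real.exp (-x^2/2) : ℝ):ℂ)‖)
        + |δ n| * ∫ x : ℝ, |x| * Real.exp (-x^2/2) :=
      key_est a hpos (hτpos n) (hsum n) hσn (δ n)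
    rw [hIrn] at h
    calc |r n - G n| = ‖(((r n - G n : ℝ)) : ℂ)‖ := by
          rw [Complex.norm_real, Real.norm_eq_abs]
      _ = ‖((r n : ℝ):ℂ) - ((G n : ℝ):ℂ)‖ := by rw [Complex.ofReal_sub]
      _ ≤ _ := h
  have hbound : Tendsto (fun n =>
      (∫ x in (-(Real.pi * sdK a (τ n)))..(Real.pi * sdK a (τ n)),
        ‖charN a (τ n) x - ((Real.exp (-x^2/2) : ℝ):ℂ)‖)
      + |δ n| * ∫ x : ℝ, |x| * Real.exp (-x^2/2)) atTop (𝓝 0) := by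
    have h1 : Tendsto (fun n => |δ n| * ∫ x : ℝ, |x| * Real.exp (-x^2/2)) atTop (𝓝 0) := by
      have := (hδ.abs).mul_const (∫ x : ℝ, |x| * Real.exp (-x^2/2))
      simpa using this
    simpa using hSGint.add h1
  have hrG : Tendsto (fun n => |r n - G n|) atTop (𝓝 0) :=
    squeeze_zero' (Eventually.of_forall fun n => abs_nonneg _) hest hbound
  have hrG0 : Tendsto (fun n => r n - G n) atTop (𝓝 0) := by
    have := squeeze_zero_norm' (Eventually.of_forall fun n => le_of_eq (Real.norm_eq_abs _)) hrG
    exact this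
  have hr : Tendsto r atTop (𝓝 (Real.sqrt (2*Real.pi))) := by
    have := hrG0.add hG
    simpa using this
  -- final algebra
  have hfin : ∀ᶠ n in atTop,
      a n * Real.sqrt (2 * Real.pi) * st (τ n) * τ n ^ n / psum a (τ n)
        = r n * (st (τ n) / sdK a (τ n)) * (Real.sqrt (2*Real.pi) / (2 * Real.pi)) := by
    filter_upwards [hσpos] with n hσn
    rw [hrdef]
    simp only
    field_simp [hσn.ne', Real.pi_ne_zero, (hpsum n).ne']
  have hlim : Tendsto (fun n => r n * (st (τ n) / sdK a (τ n))
      * (Real.sqrt (2*Real.pi) / (2 * Real.pi))) atTop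
      (𝓝 (Real.sqrt (2*Real.pi) * 1 * (Real.sqrt (2*Real.pi) / (2 * Real.pi)))) :=
    (hr.mul hstq).mul_const _
  have hval : Real.sqrt (2*Real.pi) * 1 * (Real.sqrt (2*Real.pi) / (2 * Real.pi)) = 1 := by
    have hne : (2*Real.pi) ≠ 0 := by positivity
    rw [mul_one, div_eq_mul_inv, ← mul_assoc,
      Real.mul_self_sqrt (by positivity : (0:ℝ) ≤ 2*Real.pi), mul_inv_cancel₀ hne]
  rw [hval] at hlim
  exact hlim.congr' (hfin.mono fun n hn => hn.symm)
end
end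

section
/- (Hayman) If a power series f ∈ K with radius of convergence R > 0 belongs to the Hayman class, then f is strongly Gaussian. -/
open Filter Topology MeasureTheory
open scoped ENNReal NNReal Classical

noncomputable section

/-- Pointwise comparison of the Gaussian with an integrable rational bound. -/
lemma gauss_le_inv (θ : ℝ) : Real.exp (-θ ^ 2 / 2) ≤ 2 * (1 + θ ^ 2)⁻¹ := by
  have h1 : θ ^ 2 / 2 + 1 ≤ Real.exp (θ ^ 2 / 2) := Real.add_one_le_exp _
  have h2 : Real.exp (-θ ^ 2 / 2) * Real.exp (θ ^ 2 / 2) = 1 := by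
    rw [← Real.exp_add, show -θ ^ 2 / 2 + θ ^ 2 / 2 = 0 by ring, Real.exp_zero]
  have h3 : (0:ℝ) < 1 + θ ^ 2 := by positivity
  rw [show 2 * (1 + θ ^ 2)⁻¹ = 2 / (1 + θ ^ 2) by ring, le_div_iff₀ h3]
  nlinarith [Real.exp_pos (-θ ^ 2 / 2), mul_nonneg (Real.exp_pos (-θ ^ 2 / 2)).le
    (sub_nonneg.mpr h1)]

/-- Eventually in `nhdsUpto R`, the point `t` is positive and below the radius. -/
lemma nhdsUpto_event (R : ℝ≥0∞) (hR : 0 < R) :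
    ∀ᶠ t in nhdsUpto R, 0 < t ∧ ENNReal.ofReal t < R := by
  rw [nhdsUpto]
  split_ifs with hT
  · filter_upwards [eventually_ge_atTop 1] with t ht
    exact ⟨lt_of_lt_of_le one_pos ht, hT ▸ ENNReal.ofReal_lt_top⟩
  · have hc : 0 < R.toReal := ENNReal.toReal_pos hR.ne' hT
    filter_upwards [Ioo_mem_nhdsLT (half_lt_self hc)] with t ht
    refine ⟨lt_trans (half_pos hc) ht.1, ?_⟩
    rw [← ENNReal.ofReal_toReal hT]
    exact ENNReal.ofReal_lt_ofReal_iff hc |>.mpr ht.2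

/-- Continuity of the normalized characteristic function in `θ`. -/
lemma charN_cont (a : ℕ → ℝ) (t : ℝ) (hpos : ∀ n, 0 ≤ a n) (ht : 0 < t)
    (hs : Summable fun n => a n * t ^ n) : Continuous (fun θ => charN a t θ) := by
  have c1 : Continuous fun θ : ℝ =>
      Fc a ((t : ℂ) * Complex.exp (Complex.I * ((θ / sdK a t : ℝ) : ℂ))) := by
    unfold Fc
    apply continuous_tsum (u := fun n => a n * t ^ n) (fun n => by fun_prop) hs
    intro n θ
    rw [norm_mul, norm_pow, norm_mul]
    simp only [Complex.norm_real, Real.norm_eq_abs, Complex.norm_exp]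
    have : (Complex.I * ((θ / sdK a t : ℝ) : ℂ)).re = 0 := by simp
    rw [this, Real.exp_zero, mul_one, abs_of_nonneg (hpos n), abs_of_pos ht]
  exact (c1.div_const _).mul (by fun_prop)

set_option maxHeartbeats 1000000 in
/-- Hayman, Theorem 3.3.7. If `f ∈ K` with radius of convergence `R > 0`
belongs to the Hayman class — i.e. `σ_f(t) → ∞` as `t ↑ R`, and there is a cut function
`h : [0,R) → (0,π]` such that `sup_{|θ|≤h(t)σ_f(t)} |E(e^{iθX̌_t})e^{θ²/2} − 1| → 0`
(major arc) and `σ_f(t)·sup_{h(t)σ_f(t)≤|θ|≤πσ_f(t)} |E(e^{iθX̌_t})| → 0` (minor arc) —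
then `f` is strongly Gaussian. -/
theorem statement15 (a : ℕ → ℝ) (R : ℝ≥0∞) (hR : 0 < R)
    (hpos : ∀ n, 0 ≤ a n) (ha0 : 0 < a 0) (ha1 : ∃ n, 1 ≤ n ∧ 0 < a n)
    (hconv : ∀ t : ℝ, 0 ≤ t → ENNReal.ofReal t < R → Summable fun n => a n * t ^ n)
    (hdiv : ∀ t : ℝ, R < ENNReal.ofReal t → ¬ Summable fun n => a n * t ^ n)
    (hvar : Tendsto (sdK a) (nhdsUpto R) atTop)
    (h : ℝ → ℝ) (hcut : ∀ t : ℝ, 0 < h t ∧ h t ≤ Real.pi)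
    (hmajor : ∀ ε : ℝ, 0 < ε → ∀ᶠ t in nhdsUpto R, ∀ θ : ℝ, |θ| ≤ h t * sdK a t →
        ‖charN a t θ * ((Real.exp (θ ^ 2 / 2) : ℝ) : ℂ) - 1‖ < ε)
    (hminor : ∀ ε : ℝ, 0 < ε → ∀ᶠ t in nhdsUpto R, ∀ θ : ℝ,
        h t * sdK a t ≤ |θ| → |θ| ≤ Real.pi * sdK a t → sdK a t * ‖charN a t θ‖ < ε) :
    StronglyGaussian a R := by
  refine ⟨hvar, ?_⟩
  rw [Metric.tendsto_nhds]
  intro ε hε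
  set ε₁ : ℝ := min (1/2) (ε/27) with hε₁def
  have hε₁pos : 0 < ε₁ := lt_min (by norm_num) (by positivity)
  have hε₁half : ε₁ ≤ 1/2 := min_le_left _ _
  have hε₁ε : ε₁ ≤ ε/27 := min_le_right _ _
  have hπ : 0 < Real.pi := Real.pi_pos
  filter_upwards [hmajor ε₁ hε₁pos, hminor ε₁ hε₁pos,
    hvar.eventually_ge_atTop 1, nhdsUpto_event R hR] with t hmaj hmin hσ1 htR
  obtain ⟨ht0, htR'⟩ := htR
  set σ := sdK a t with hσdef
  have hσpos : (0:ℝ) < σ := lt_of_lt_of_le one_pos hσ1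
  have hs : Summable fun n => a n * t ^ n := hconv t ht0.le htR'
  set L := Real.pi * σ with hLdef
  have hLpos : 0 < L := mul_pos hπ hσpos
  obtain ⟨hh0, hhπ⟩ := hcut t
  set θ₀ := h t * σ with hθ₀def
  have hθ₀pos : 0 < θ₀ := mul_pos hh0 hσpos
  -- norm of the Gaussian factor
  have hG : ∀ θ : ℝ, ‖((Real.exp (-θ ^ 2 / 2) : ℝ) : ℂ)‖ = Real.exp (-θ ^ 2 / 2) := by
    intro θ
    rw [Complex.norm_real, Real.norm_eq_abs, abs_of_pos (Real.exp_pos _)]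
  -- key bound: the Gaussian at the cut point is small
  have hkey : Real.exp (-θ₀ ^ 2 / 2) < 2 * ε₁ / σ := by
    have h1 := hmaj θ₀ (le_of_eq (abs_of_pos hθ₀pos))
    have h2 := hmin θ₀ (le_of_eq (abs_of_pos hθ₀pos).symm)
      (by rw [abs_of_pos hθ₀pos]; exact mul_le_mul_of_nonneg_right hhπ hσpos.le)
    set x := charN a t θ₀ * ((Real.exp (θ₀ ^ 2 / 2) : ℝ) : ℂ) with hxdef
    have h4 : ‖(1:ℂ)‖ ≤ ‖x‖ + ‖x - 1‖ := by
      calc ‖(1:ℂ)‖ = ‖x - (x - 1)‖ := by rw [show x - (x - 1) = (1:ℂ) by ring]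
        _ ≤ ‖x‖ + ‖x - 1‖ := norm_sub_le _ _
    have h5 : ‖x‖ = ‖charN a t θ₀‖ * Real.exp (θ₀ ^ 2 / 2) := by
      rw [hxdef, norm_mul, Complex.norm_real, Real.norm_eq_abs,
        abs_of_pos (Real.exp_pos _)]
    have h3 : (1:ℝ)/2 ≤ ‖charN a t θ₀‖ * Real.exp (θ₀ ^ 2 / 2) := by
      rw [← h5]
      have : ‖(1:ℂ)‖ = 1 := by simp
      linarith [h1, h4, this.symm ▸ h4]
    have hAB : Real.exp (-θ₀ ^ 2 / 2) * Real.exp (θ₀ ^ 2 / 2) = 1 := by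
      rw [← Real.exp_add, show -θ₀ ^ 2 / 2 + θ₀ ^ 2 / 2 = 0 by ring, Real.exp_zero]
    have h6 : Real.exp (-θ₀ ^ 2 / 2) / 2 ≤ ‖charN a t θ₀‖ := by
      have h7 : ‖charN a t θ₀‖ * Real.exp (θ₀ ^ 2 / 2) * Real.exp (-θ₀ ^ 2 / 2)
          = ‖charN a t θ₀‖ := by
        rw [mul_assoc, mul_comm (Real.exp (θ₀ ^ 2 / 2)), hAB, mul_one]
      nlinarith [mul_le_mul_of_nonneg_right h3 (Real.exp_pos (-θ₀ ^ 2 / 2)).le]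
    rw [lt_div_iff₀ hσpos]
    nlinarith [mul_le_mul_of_nonneg_left h6 hσpos.le]
  -- pointwise bound on the whole interval
  have hpt : ∀ θ ∈ Set.Icc (-L) L,
      ‖charN a t θ - ((Real.exp (-θ ^ 2 / 2) : ℝ) : ℂ)‖
        ≤ 2 * ε₁ * (1 + θ ^ 2)⁻¹ + 3 * ε₁ / σ := by
    intro θ hθ
    have h3σ : (0:ℝ) ≤ 3 * ε₁ / σ := by positivity
    by_cases hc : |θ| ≤ h t * σ
    · have h1 := hmaj θ hc
      have hEG : ((Real.exp (θ ^ 2 / 2) : ℝ) : ℂ) * ((Real.exp (-θ ^ 2 / 2) : ℝ) : ℂ) = 1 := by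
        rw [← Complex.ofReal_mul, ← Real.exp_add, show θ ^ 2 / 2 + -θ ^ 2 / 2 = 0 by ring,
          Real.exp_zero, Complex.ofReal_one]
      have hid : charN a t θ - ((Real.exp (-θ ^ 2 / 2) : ℝ) : ℂ)
          = (charN a t θ * ((Real.exp (θ ^ 2 / 2) : ℝ) : ℂ) - 1)
            * ((Real.exp (-θ ^ 2 / 2) : ℝ) : ℂ) := by
        linear_combination (-(charN a t θ)) * hEG
      rw [hid, norm_mul, hG θ]
      have hb : ‖charN a t θ * ((Real.exp (θ ^ 2 / 2) : ℝ) : ℂ) - 1‖ * Real.exp (-θ ^ 2 / 2)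
          ≤ ε₁ * (2 * (1 + θ ^ 2)⁻¹) := by
        calc ‖charN a t θ * ((Real.exp (θ ^ 2 / 2) : ℝ) : ℂ) - 1‖ * Real.exp (-θ ^ 2 / 2)
            ≤ ε₁ * Real.exp (-θ ^ 2 / 2) :=
              mul_le_mul_of_nonneg_right h1.le (Real.exp_pos _).le
          _ ≤ ε₁ * (2 * (1 + θ ^ 2)⁻¹) :=
              mul_le_mul_of_nonneg_left (gauss_le_inv θ) hε₁pos.le
      linarith [hb]
    · push_neg at hc
      have habs : |θ| ≤ L := abs_le.mpr ⟨hθ.1, hθ.2⟩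
      have h1 := hmin θ hc.le habs
      have h2 : ‖charN a t θ‖ ≤ ε₁ / σ := by
        rw [le_div_iff₀ hσpos]
        nlinarith [h1]
      have h3 : Real.exp (-θ ^ 2 / 2) ≤ Real.exp (-θ₀ ^ 2 / 2) := by
        apply Real.exp_le_exp.mpr
        have hsq : θ₀ ^ 2 ≤ θ ^ 2 := by
          nlinarith [sq_abs θ, hc.le, hθ₀pos.le, abs_nonneg θ]
        linarith
      have h4 : ε₁ / σ + 2 * ε₁ / σ = 3 * ε₁ / σ := by ring
      have h5 : (0:ℝ) ≤ 2 * ε₁ * (1 + θ ^ 2)⁻¹ := by positivity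
      calc ‖charN a t θ - ((Real.exp (-θ ^ 2 / 2) : ℝ) : ℂ)‖
          ≤ ‖charN a t θ‖ + ‖((Real.exp (-θ ^ 2 / 2) : ℝ) : ℂ)‖ := norm_sub_le _ _
        _ = ‖charN a t θ‖ + Real.exp (-θ ^ 2 / 2) := by rw [hG θ]
        _ ≤ ε₁ / σ + 2 * ε₁ / σ := add_le_add h2 (h3.trans hkey.le)
        _ ≤ 2 * ε₁ * (1 + θ ^ 2)⁻¹ + 3 * ε₁ / σ := by linarith
  -- integrability
  have hcont := charN_cont a t hpos ht0 hs
  have hcont2 : Continuous fun θ : ℝ =>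
      ‖charN a t θ - ((Real.exp (-θ ^ 2 / 2) : ℝ) : ℂ)‖ := by
    apply Continuous.norm
    exact hcont.sub (by fun_prop)
  have hι1 : IntervalIntegrable (fun θ : ℝ =>
      ‖charN a t θ - ((Real.exp (-θ ^ 2 / 2) : ℝ) : ℂ)‖) volume (-L) L :=
    hcont2.intervalIntegrable _ _
  have hcinv : Continuous fun θ : ℝ => (1 + θ ^ 2)⁻¹ := by
    apply Continuous.inv₀
    · fun_prop
    · intro θ; positivity
  have hι2a : IntervalIntegrable (fun θ : ℝ => 2 * ε₁ * (1 + θ ^ 2)⁻¹) volume (-L) L :=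
    (continuous_const.mul hcinv).intervalIntegrable _ _
  have hι2b : IntervalIntegrable (fun _ : ℝ => 3 * ε₁ / σ) volume (-L) L :=
    intervalIntegrable_const
  have hι2 : IntervalIntegrable (fun θ : ℝ => 2 * ε₁ * (1 + θ ^ 2)⁻¹ + 3 * ε₁ / σ)
      volume (-L) L := hι2a.add hι2b
  -- monotonicity of the integral
  have hmono := intervalIntegral.integral_mono_on (by linarith : -L ≤ L) hι1 hι2 hpt
  have hcalc : (∫ θ in (-L)..L, (2 * ε₁ * (1 + θ ^ 2)⁻¹ + 3 * ε₁ / σ))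
      = 2 * ε₁ * (Real.arctan L - Real.arctan (-L)) + (L - (-L)) * (3 * ε₁ / σ) := by
    rw [intervalIntegral.integral_add hι2a hι2b, intervalIntegral.integral_const,
      intervalIntegral.integral_const_mul, integral_inv_one_add_sq, smul_eq_mul]
  have harct : Real.arctan L - Real.arctan (-L) ≤ Real.pi := by
    have := Real.arctan_lt_pi_div_two L
    have := Real.neg_pi_div_two_lt_arctan (-L)
    linarith
  have hLσ : (L - (-L)) * (3 * ε₁ / σ) = 6 * Real.pi * ε₁ := by
    rw [hLdef]; field_simp; ring
  have hbound : (∫ θ in (-L)..L, ‖charN a t θ - ((Real.exp (-θ ^ 2 / 2) : ℝ) : ℂ)‖)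
      ≤ 8 * Real.pi * ε₁ := by
    calc (∫ θ in (-L)..L, ‖charN a t θ - ((Real.exp (-θ ^ 2 / 2) : ℝ) : ℂ)‖)
        ≤ ∫ θ in (-L)..L, (2 * ε₁ * (1 + θ ^ 2)⁻¹ + 3 * ε₁ / σ) := hmono
      _ = 2 * ε₁ * (Real.arctan L - Real.arctan (-L)) + (L - (-L)) * (3 * ε₁ / σ) := hcalc
      _ ≤ 2 * ε₁ * Real.pi + 6 * Real.pi * ε₁ := by
          rw [hLσ]
          have := mul_le_mul_of_nonneg_left harct (by positivity : (0:ℝ) ≤ 2 * ε₁)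
          linarith
      _ = 8 * Real.pi * ε₁ := by ring
  have hnn : (0:ℝ) ≤ ∫ θ in (-L)..L, ‖charN a t θ - ((Real.exp (-θ ^ 2 / 2) : ℝ) : ℂ)‖ :=
    intervalIntegral.integral_nonneg (by linarith) (fun x _ => norm_nonneg _)
  rw [Real.dist_eq, sub_zero, abs_of_nonneg hnn]
  calc (∫ θ in (-L)..L, ‖charN a t θ - ((Real.exp (-θ ^ 2 / 2) : ℝ) : ℂ)‖)
      ≤ 8 * Real.pi * ε₁ := hbound
    _ ≤ 8 * 3.15 * (ε/27) := by
        have hπ315 : Real.pi ≤ 3.15 := Real.pi_lt_d2.le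
        nlinarith [hε₁pos, hε₁ε, hπ]
    _ < ε := by linarith
end
end
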